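/- arXiv:2407.03881 — 4 statements merged into one kernel-verified Lean document; each statement's English description precedes it below -/
import Mathlib

section
/- Let C be a convex set in an infinite-dimensional real Hilbert space H. Then the following are equivalent: (1) C is somewhat bounded; (2) there exist z₀ ∈ C, a finite-dimensional subspace F ⊂ H, and α, β > 0 such that α·B_F ⊆ C − z₀ ⊆ D_F(α,β), where B_F is the closed unit ball of F and D_F(α,β) = { x ∈ H : ‖π_{F⊥}(x)‖ − β ≤ α⁻¹β‖π_F(x)‖ } (π_F and π_{F⊥} denoting the orthogonal projections onto F and its orthogonal complement F⊥). -/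
open Bornology

variable {H : Type*} [NormedAddCommGroup H] [InnerProductSpace ℝ H]

/-- A convex set `C` in an infinite-dimensional Hilbert space `H` is *somewhat bounded*
if there are `x₀ ∈ C`, a finite-dimensional subspace `F ⊂ H` and `α > 0` such that
`α·B_F ⊆ C − x₀` and `F⊥ ∩ (C − x₀)` is bounded. -/
def SomewhatBounded (C : Set H) : Prop :=
  ∃ x₀ ∈ C, ∃ F : Submodule ℝ H, FiniteDimensional ℝ F ∧ ∃ α : ℝ, 0 < α ∧
    {y : H | y ∈ F ∧ ‖y‖ ≤ α} ⊆ (· - x₀) '' C ∧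
    IsBounded ((Fᗮ : Set H) ∩ ((· - x₀) '' C))

/-- `D_F(α,β) = { x ∈ H : ‖π_{F⊥}(x)‖ − β ≤ α⁻¹β‖π_F(x)‖ }`. -/
noncomputable def DSet [CompleteSpace H] (F : Submodule ℝ H) [Submodule.HasOrthogonalProjection F]
    (α β : ℝ) : Set H :=
  {x : H | ‖(Submodule.orthogonalProjectionOnto Fᗮ x : H)‖ - β ≤ α⁻¹ * β * ‖(Submodule.orthogonalProjectionOnto F x : H)‖}

private lemma norm_proj_le [CompleteSpace H] (F : Submodule ℝ H) [Submodule.HasOrthogonalProjection F]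
    (x : H) : ‖(Submodule.orthogonalProjectionOnto F x : H)‖ ≤ ‖x‖ := by
  have h := Submodule.norm_sq_eq_add_norm_sq_projection x F
  simp only [← Submodule.norm_coe] at h
  have h1 : (0:ℝ) ≤ ‖(Submodule.orthogonalProjectionOnto Fᗮ x : H)‖ := norm_nonneg _
  have h2 : (0:ℝ) ≤ ‖(Submodule.orthogonalProjectionOnto F x : H)‖ := norm_nonneg _
  have h3 : (0:ℝ) ≤ ‖x‖ := norm_nonneg _
  nlinarith [h]

/-- A convex set `C` in an infinite-dimensional Hilbert space `H` is somewhat bounded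
if and only if there are `z₀ ∈ C`, a finite-dimensional subspace `F ⊂ H` and `α, β > 0`
such that `α·B_F ⊆ C − z₀ ⊆ D_F(α,β)`. -/
theorem somewhatBounded_iff [CompleteSpace H] (hH : ¬ FiniteDimensional ℝ H)
    (C : Set H) (hC : Convex ℝ C) :
    SomewhatBounded C ↔
      ∃ z₀ ∈ C, ∃ F : Submodule ℝ H, ∃ _ : FiniteDimensional ℝ F, ∃ α β : ℝ,
        0 < α ∧ 0 < β ∧ {y : H | y ∈ F ∧ ‖y‖ ≤ α} ⊆ (· - z₀) '' C ∧
        (· - z₀) '' C ⊆ DSet F α β := by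
  constructor
  · rintro ⟨x₀, hx₀, F, hF, α, hα, hball, hbdd⟩
    haveI := hF
    obtain ⟨M, hM⟩ := hbdd.exists_norm_le
    set β : ℝ := max M 1 with hβdef
    have hβ : 0 < β := lt_of_lt_of_le one_pos (le_max_right _ _)
    have hMβ : M ≤ β := le_max_left _ _
    refine ⟨x₀, hx₀, F, hF, α, β, hα, hβ, hball, ?_⟩
    rintro x ⟨c, hc, rfl⟩
    set x := c - x₀ with hxdef
    set u : H := (Submodule.orthogonalProjectionOnto F x : H) with hu
    set v : H := (Submodule.orthogonalProjectionOnto Fᗮ x : H) with hv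
    have hxuv : u + v = x := by rw [hu, hv]; exact Submodule.starProjection_add_starProjection_orthogonal (K := F) x
    have huF : u ∈ F := (Submodule.orthogonalProjectionOnto F x).2
    show ‖v‖ - β ≤ α⁻¹ * β * ‖u‖
    by_cases hu0 : u = 0
    · -- x ∈ Fᗮ, so ‖x‖ ≤ M ≤ β
      have hxF : x ∈ Fᗮ := by
        rw [← hxuv, hu0, zero_add]
        exact (Submodule.orthogonalProjectionOnto Fᗮ x).2
      have hxM : ‖x‖ ≤ M := hM x ⟨hxF, ⟨c, hc, rfl⟩⟩
      have hvx : ‖v‖ ≤ ‖x‖ := norm_proj_le Fᗮ x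
      have : α⁻¹ * β * ‖u‖ = 0 := by rw [hu0, norm_zero, mul_zero]
      linarith
    · have hun : 0 < ‖u‖ := norm_pos_iff.mpr hu0
      set t : ℝ := α / (α + ‖u‖) with ht
      have hαu : 0 < α + ‖u‖ := by linarith
      have ht0 : 0 < t := div_pos hα hαu
      have ht1 : t < 1 := by
        rw [ht, div_lt_one hαu]; linarith
      have htkey : t * ‖u‖ = (1 - t) * α := by
        have h' : t * (α + ‖u‖) = α := by rw [ht]; exact div_mul_cancel₀ α hαu.ne'
        linarith
      set w : H := -(α / ‖u‖) • u with hw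
      have hwF : w ∈ F := F.smul_mem _ huF
      have hwnorm : ‖w‖ = α := by
        rw [hw, norm_smul, norm_neg, Real.norm_eq_abs, abs_of_pos (div_pos hα hun)]
        field_simp
      obtain ⟨c', hc', hc'w⟩ := hball ⟨hwF, hwnorm.le⟩
      -- the convex combination
      set p : H := t • x + (1 - t) • w with hp
      have hpC : p ∈ (· - x₀) '' C := by
        refine ⟨t • c + (1 - t) • c', hC hc hc' ht0.le (by linarith) (by ring), ?_⟩
        simp only [hp, hxdef, ← hc'w]
        module
      -- projection of p onto F is zero
      have hpF : (Submodule.orthogonalProjectionOnto F p : H) = 0 := by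
        have hpw : (Submodule.orthogonalProjectionOnto F w : H) = w := by
          have := Submodule.orthogonalProjectionOnto_mem_subspace_eq_self (K := F) ⟨w, hwF⟩
          simpa using congrArg (Subtype.val) this
        have : (Submodule.orthogonalProjectionOnto F p : H) = t • u + (1 - t) • w := by
          simp only [hp, map_add, map_smul]
          push_cast
          rw [hpw, hu]
        rw [this, hw, smul_smul]
        have : (1 - t) * -(α / ‖u‖) = -t := by
          field_simp
          linarith [htkey]
        rw [this]
        module
      have hpFmem : p ∈ Fᗮ := Submodule.orthogonalProjectionOnto_eq_zero_iff.mp (by exact_mod_cast Subtype.ext hpF)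
      have hpM : ‖p‖ ≤ M := hM p ⟨hpFmem, hpC⟩
      -- projection of p onto Fᗮ is t • v
      have hpFo : (Submodule.orthogonalProjectionOnto Fᗮ p : H) = t • v := by
        have hw0 : (Submodule.orthogonalProjectionOnto Fᗮ w : H) = 0 := by
          have := Submodule.orthogonalProjectionOnto_orthogonal_apply_eq_zero hwF
          simpa using congrArg (Subtype.val) this
        simp only [hp, map_add, map_smul]
        push_cast
        rw [hw0, hv, smul_zero, add_zero]
      have hpself : (Submodule.orthogonalProjectionOnto Fᗮ p : H) = p := by
        have := Submodule.orthogonalProjectionOnto_mem_subspace_eq_self (K := Fᗮ) ⟨p, hpFmem⟩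
        simpa using congrArg (Subtype.val) this
      have htv : t * ‖v‖ ≤ M := by
        have : ‖t • v‖ = ‖p‖ := by rw [← hpFo, hpself]
        rw [norm_smul, Real.norm_eq_abs, abs_of_pos ht0] at this
        linarith
      -- conclude: ‖v‖ ≤ M/t = M(α+‖u‖)/α ≤ β + α⁻¹ β ‖u‖
      have hvle : ‖v‖ ≤ M * (α + ‖u‖) / α := by
        rw [le_div_iff₀ hα]
        calc ‖v‖ * α = (t * ‖v‖) * (α + ‖u‖) := by
              rw [ht]; field_simp
          _ ≤ M * (α + ‖u‖) := by
              apply mul_le_mul_of_nonneg_right htv hαu.le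
      have : M * (α + ‖u‖) / α = M + α⁻¹ * M * ‖u‖ := by field_simp
      rw [this] at hvle
      have h2 : α⁻¹ * M * ‖u‖ ≤ α⁻¹ * β * ‖u‖ := by
        apply mul_le_mul_of_nonneg_right _ (norm_nonneg _)
        exact mul_le_mul_of_nonneg_left hMβ (inv_nonneg.mpr hα.le)
      linarith
  · rintro ⟨z₀, hz₀, F, hF, α, β, hα, hβ, hball, hD⟩
    haveI := hF
    refine ⟨z₀, hz₀, F, hF, α, hα, hball, ?_⟩
    rw [isBounded_iff_forall_norm_le]
    refine ⟨β, ?_⟩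
    rintro x ⟨hxF, hxC⟩
    have hd := hD hxC
    have h1 : (Submodule.orthogonalProjectionOnto F x : H) = 0 := by
      have := Submodule.orthogonalProjectionOnto_eq_zero_iff.mpr hxF
      simpa using congrArg (Subtype.val) this
    have h2 : (Submodule.orthogonalProjectionOnto Fᗮ x : H) = x := by
      have := Submodule.orthogonalProjectionOnto_mem_subspace_eq_self (K := Fᗮ) ⟨x, hxF⟩
      simpa using congrArg (Subtype.val) this
    simp only [DSet, Set.mem_setOf_eq, h1, h2, norm_zero, mul_zero] at hd
    linarith
end

section
/- Let C be a closed, convex, somewhat bounded set in a separable, infinite-dimensional real Hilbert space H. Then there is a dense open set ℛ ⊆ 𝒩(C) (with respect to the topology of pointwise convergence) such that every f ∈ ℛ has a fixed point. -/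
open Bornology

variable {H : Type*} [NormedAddCommGroup H] [InnerProductSpace ℝ H]

/-- `𝒩(C)`: the nonexpansive self-mappings of `C`, with the topology of pointwise
convergence (subtype of `C → C` with the product topology). -/
abbrev Nonexp (C : Set H) :=
  {f : C → C // ∀ x y : C, dist (f x) (f y) ≤ dist x y}

open Filter Metric Function Set Topology
open scoped InnerProductSpace


lemma packing_lemma (S : Set H) (B δ : ℝ) (hδ : 0 < δ) (hB : ∀ s ∈ S, ‖s‖ ≤ B) :
    ∃ T : Set H, T ⊆ S ∧ T.Finite ∧ ∀ s ∈ S, ∃ t ∈ T, -δ ≤ ⟪s, t⟫_ℝ := by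
  classical
  by_contra hcon
  push_neg at hcon
  -- choice function
  have hpick : ∀ T : Set H, T ⊆ S → T.Finite → ∃ s, s ∈ S ∧ ∀ t ∈ T, ⟪s, t⟫_ℝ < -δ := by
    intro T h1 h2
    obtain ⟨s, hs1, hs2⟩ := hcon T h1 h2
    exact ⟨s, hs1, hs2⟩
  let pick : Set H → H := fun T =>
    if h : T ⊆ S ∧ T.Finite then (hpick T h.1 h.2).choose else 0
  let Tset : ℕ → Set H := fun n => Nat.rec (∅ : Set H) (fun _ T => insert (pick T) T) n
  have hTsucc : ∀ n, Tset (n + 1) = insert (pick (Tset n)) (Tset n) := fun n => rfl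
  have hTinv : ∀ n, Tset n ⊆ S ∧ (Tset n).Finite := by
    intro n
    induction n with
    | zero => exact ⟨Set.empty_subset _, Set.finite_empty⟩
    | succ n ih =>
      have hp : pick (Tset n) ∈ S := by
        have : pick (Tset n) = (hpick (Tset n) ih.1 ih.2).choose := by
          simp only [pick, dif_pos (And.intro ih.1 ih.2)]
        rw [this]
        exact (hpick (Tset n) ih.1 ih.2).choose_spec.1
      rw [hTsucc]
      exact ⟨Set.insert_subset hp ih.1, ih.2.insert _⟩
  set seq : ℕ → H := fun n => pick (Tset n) with hseq
  have hspec : ∀ n, seq n ∈ S ∧ ∀ t ∈ Tset n, ⟪seq n, t⟫_ℝ < -δ := by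
    intro n
    have h := hTinv n
    have : seq n = (hpick (Tset n) h.1 h.2).choose := by
      simp only [hseq, pick, dif_pos (And.intro h.1 h.2)]
    rw [this]
    exact (hpick (Tset n) h.1 h.2).choose_spec
  have hmono : ∀ m n, m ≤ n → Tset m ⊆ Tset n := by
    intro m n h
    induction n with
    | zero => simp_all
    | succ n ih =>
      rcases Nat.lt_or_ge m (n+1) with h' | h'
      · exact (ih (Nat.lt_succ_iff.mp h')).trans (by rw [hTsucc]; exact Set.subset_insert _ _)
      · have : m = n + 1 := le_antisymm h h'
        subst this; exact subset_rfl
  have hmem : ∀ m n, m < n → seq m ∈ Tset n := by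
    intro m n h
    have h1 : seq m ∈ Tset (m + 1) := by rw [hTsucc]; exact Set.mem_insert _ _
    exact hmono (m+1) n h h1
  have hneg : ∀ m n, m ≠ n → ⟪seq n, seq m⟫_ℝ < -δ := by
    intro m n h
    rcases Nat.lt_or_ge m n with h' | h'
    · exact (hspec n).2 _ (hmem m n h')
    · have h'' : n < m := lt_of_le_of_ne h' (Ne.symm h)
      rw [real_inner_comm]
      exact (hspec m).2 _ (hmem n m h'')
  have hBnn : 0 ≤ B := le_trans (norm_nonneg _) (hB _ (hspec 0).1)
  set N : ℕ := ⌈(B^2 + δ)/δ⌉₊ + 1 with hN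
  have key : (0:ℝ) ≤ ‖∑ n ∈ Finset.range N, seq n‖^2 := sq_nonneg _
  have expand : ‖∑ n ∈ Finset.range N, seq n‖^2
      = ∑ i ∈ Finset.range N, ∑ j ∈ Finset.range N, ⟪seq i, seq j⟫_ℝ := by
    rw [← real_inner_self_eq_norm_sq, sum_inner]
    exact Finset.sum_congr rfl fun i _ => inner_sum _ _ _
  have hbound : ∑ i ∈ Finset.range N, ∑ j ∈ Finset.range N, ⟪seq i, seq j⟫_ℝ
      ≤ (N:ℝ) * (B^2 + δ - δ * N) := by
    have h1 : ∀ i ∈ Finset.range N, ∑ j ∈ Finset.range N, ⟪seq i, seq j⟫_ℝ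
        ≤ B^2 + δ - δ * N := by
      intro i hi
      have h2 : ∀ j ∈ Finset.range N, ⟪seq i, seq j⟫_ℝ
          ≤ -δ + (if j = i then B^2 + δ else 0) := by
        intro j _
        by_cases h : j = i
        · subst h
          rw [if_pos rfl]
          have hb := hB _ (hspec j).1
          have h3 : ⟪seq j, seq j⟫_ℝ = ‖seq j‖^2 := real_inner_self_eq_norm_sq _
          nlinarith [norm_nonneg (seq j)]
        · rw [if_neg h]
          have := hneg j i h
          linarith
      calc ∑ j ∈ Finset.range N, ⟪seq i, seq j⟫_ℝ
            ≤ ∑ j ∈ Finset.range N, (-δ + (if j = i then B^2 + δ else 0)) :=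
              Finset.sum_le_sum h2
        _ = (N:ℝ) * (-δ) + (B^2 + δ) := by
              rw [Finset.sum_add_distrib, Finset.sum_const, Finset.card_range,
                Finset.sum_ite_eq' (Finset.range N) i (fun _ => B^2 + δ), if_pos hi,
                nsmul_eq_mul]
        _ = B^2 + δ - δ * N := by ring
    calc ∑ i ∈ Finset.range N, ∑ j ∈ Finset.range N, ⟪seq i, seq j⟫_ℝ
        ≤ ∑ _i ∈ Finset.range N, (B^2 + δ - δ * N) := Finset.sum_le_sum h1
      _ = (N:ℝ) * (B^2 + δ - δ * N) := by
          rw [Finset.sum_const, Finset.card_range, nsmul_eq_mul]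
  have hceil : (B^2 + δ)/δ ≤ (⌈(B^2 + δ)/δ⌉₊ : ℝ) := Nat.le_ceil _
  have hNge : (B^2 + δ)/δ + 1 ≤ (N:ℝ) := by
    rw [hN]; push_cast; linarith
  have hNpos : (0:ℝ) < N := by positivity
  have : δ * N ≤ B^2 + δ := by nlinarith [key, expand, hbound]
  have : (N:ℝ) ≤ (B^2+δ)/δ := by rw [le_div_iff₀ hδ]; linarith
  linarith


noncomputable def truncBall (N : ℝ) (a : H) : H := if ‖a‖ ≤ N then a else (N / ‖a‖) • a

lemma truncBall_eq_self {N : ℝ} {a : H} (h : ‖a‖ ≤ N) : truncBall N a = a := if_pos h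

lemma truncBall_norm_le (N : ℝ) (hN : 0 ≤ N) (a : H) : ‖truncBall N a‖ ≤ N := by
  unfold truncBall; split_ifs with h
  · exact h
  · push_neg at h
    have ha : (0:ℝ) < ‖a‖ := lt_of_le_of_lt hN h
    rw [norm_smul, Real.norm_eq_abs, abs_of_nonneg (div_nonneg hN (norm_nonneg a)),
      div_mul_cancel₀ _ (ne_of_gt ha)]

lemma truncBall_varineq (N : ℝ) (hN : 0 ≤ N) (a c : H) (hc : ‖c‖ ≤ N) :
    ⟪a - truncBall N a, c - truncBall N a⟫_ℝ ≤ 0 := by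
  unfold truncBall; split_ifs with h
  · simp
  · push_neg at h
    have ha : (0:ℝ) < ‖a‖ := lt_of_le_of_lt hN h
    have e1 : a - (N / ‖a‖) • a = (1 - N / ‖a‖) • a := by
      rw [sub_smul, one_smul]
    rw [e1, real_inner_smul_left, inner_sub_right, real_inner_smul_right,
      real_inner_self_eq_norm_mul_norm]
    have h2 : N / ‖a‖ * (‖a‖ * ‖a‖) = N * ‖a‖ := by field_simp
    have h3 : ⟪a, c⟫_ℝ ≤ N * ‖a‖ := by
      calc ⟪a, c⟫_ℝ ≤ ‖a‖ * ‖c‖ := real_inner_le_norm a c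
        _ ≤ N * ‖a‖ := by nlinarith
    have h4 : 0 ≤ 1 - N / ‖a‖ := by
      rw [sub_nonneg, div_le_one ha]; exact le_of_lt h
    rw [h2]
    have h5 : ⟪a, c⟫_ℝ - N * ‖a‖ ≤ 0 := by linarith
    exact mul_nonpos_of_nonneg_of_nonpos h4 h5

lemma truncBall_nonexpansive (N : ℝ) (hN : 0 ≤ N) (a b : H) :
    ‖truncBall N a - truncBall N b‖ ≤ ‖a - b‖ := by
  set u := truncBall N a with hu
  set v := truncBall N b with hv
  have h1 : ⟪a - u, v - u⟫_ℝ ≤ 0 := truncBall_varineq N hN a v (truncBall_norm_le N hN b)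
  have h2 : ⟪b - v, u - v⟫_ℝ ≤ 0 := truncBall_varineq N hN b u (truncBall_norm_le N hN a)
  have e0 : a - b = (a - u) + (u - v) + (v - b) := by abel
  have e1 : ⟪a - b, u - v⟫_ℝ = ⟪a - u, u - v⟫_ℝ + ⟪u - v, u - v⟫_ℝ + ⟪v - b, u - v⟫_ℝ := by
    rw [e0, inner_add_left, inner_add_left]
  have e2 : ⟪a - u, u - v⟫_ℝ = -⟪a - u, v - u⟫_ℝ := by
    rw [← neg_sub v u, inner_neg_right]
  have e3 : ⟪v - b, u - v⟫_ℝ = -⟪b - v, u - v⟫_ℝ := by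
    rw [← neg_sub b v, inner_neg_left]
  have e4 : ⟪u - v, u - v⟫_ℝ = ‖u - v‖^2 := real_inner_self_eq_norm_sq _
  have key : ‖u - v‖^2 ≤ ⟪a - b, u - v⟫_ℝ := by
    rw [e1, e2, e3, e4]; linarith
  have cs : ⟪a - b, u - v⟫_ℝ ≤ ‖a - b‖ * ‖u - v‖ := real_inner_le_norm _ _
  nlinarith [norm_nonneg (u - v), norm_nonneg (a - b)]


lemma le_of_eps {a b : ℝ} (h : ∀ ε : ℝ, 0 < ε → a ≤ b + ε) : a ≤ b := by
  by_contra hc; push_neg at hc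
  have := h ((a - b)/2) (by linarith); linarith

set_option maxHeartbeats 1000000 in
lemma fixedPoint_of_boundedOrbit [CompleteSpace H] {C : Set H}
    (hCcl : IsClosed C) (hCconv : Convex ℝ C) {x₀ : H} (hx₀ : x₀ ∈ C)
    (h : C → C) (hne : ∀ x y : C, dist (h x) (h y) ≤ dist x y)
    (b : C) (ρ : ℝ) (horb : ∀ n : ℕ, ‖(↑(h^[n] b) : H) - x₀‖ ≤ ρ) :
    ∃ x : C, h x = x := by
  classical
  set x : ℕ → H := fun n => ((h^[n] b : C) : H) with hx
  set u : H → ℕ → ℝ := fun y n => ‖y - x n‖^2 with hu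
  set φ : H → ℝ := fun y => limsup (u y) atTop with hφ
  have hρ0 : 0 ≤ ρ := le_trans (norm_nonneg _) (horb 0)
  have hub : ∀ y n, u y n ≤ (‖y - x₀‖ + ρ)^2 := by
    intro y n
    have h1 : ‖y - x n‖ ≤ ‖y - x₀‖ + ρ := by
      have h5 : ‖x₀ - x n‖ ≤ ρ := by rw [norm_sub_rev]; exact horb n
      calc ‖y - x n‖ ≤ ‖y - x₀‖ + ‖x₀ - x n‖ := norm_sub_le_norm_sub_add_norm_sub _ _ _
        _ ≤ ‖y - x₀‖ + ρ := by linarith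
    have h0 : (0:ℝ) ≤ ‖y - x n‖ := norm_nonneg _
    simp only [hu]
    nlinarith [norm_nonneg (y - x₀)]
  have hbdd : ∀ y : H, IsBoundedUnder (· ≤ ·) atTop (u y) := fun y =>
    isBoundedUnder_of ⟨(‖y - x₀‖ + ρ)^2, fun n => hub y n⟩
  have hcob : ∀ y : H, IsCoboundedUnder (· ≤ ·) atTop (u y) := fun y =>
    isCoboundedUnder_le_of_le atTop (fun n => sq_nonneg _)
  have T1 : ∀ (y : H) (a : ℝ), (∀ᶠ n in atTop, u y n ≤ a) → φ y ≤ a := fun y a hev =>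
    limsup_le_of_le (hcob y) hev
  have T2 : ∀ (y : H) (ε : ℝ), 0 < ε → ∀ᶠ n in atTop, u y n < φ y + ε := fun y ε hε =>
    eventually_lt_of_limsup_lt (by linarith [le_refl (φ y)] : limsup (u y) atTop < φ y + ε)
      (hbdd y)
  have T3 : ∀ y : H, 0 ≤ φ y := fun y =>
    le_limsup_of_frequently_le (Frequently.of_forall fun n => sq_nonneg _) (hbdd y)
  -- parallelogram pointwise
  have upar : ∀ y z : H, ∀ n, u ((2:ℝ)⁻¹ • (y + z)) n
      = u y n / 2 + u z n / 2 - ‖y - z‖^2 / 4 := by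
    intro y z n
    have e1 : (2:ℝ)⁻¹ • (y + z) - x n = (2:ℝ)⁻¹ • ((y - x n) + (z - x n)) := by
      rw [smul_add, smul_add, smul_sub, smul_sub]; module
    have e2 : y - z = (y - x n) - (z - x n) := by abel
    have hpar := parallelogram_law_with_norm ℝ (y - x n) (z - x n)
    simp only [hu]
    rw [e1, norm_smul]
    rw [e2]
    have : ‖(2:ℝ)⁻¹‖ = (2:ℝ)⁻¹ := by
      rw [Real.norm_eq_abs, abs_of_pos]; norm_num
    rw [this]
    nlinarith [hpar]
  have hmid : ∀ y z : H, φ ((2:ℝ)⁻¹ • (y + z)) ≤ φ y / 2 + φ z / 2 - ‖y - z‖^2 / 4 := by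
    intro y z
    apply le_of_eps
    intro ε hε
    have ev1 := T2 y ε hε
    have ev2 := T2 z ε hε
    apply T1
    filter_upwards [ev1, ev2] with n h1 h2
    rw [upar y z n]; linarith
  -- shift
  have hshift : ∀ y : C, φ ((h y : H)) ≤ φ (y : H) := by
    intro y
    apply le_of_eps
    intro ε hε
    obtain ⟨N, hN⟩ := eventually_atTop.mp (T2 (y : H) ε hε)
    apply T1
    rw [eventually_atTop]
    refine ⟨N + 1, fun n hn => ?_⟩
    obtain ⟨m, rfl⟩ : ∃ m, n = m + 1 := ⟨n - 1, by omega⟩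
    have hd : ‖(h y : H) - x (m+1)‖ ≤ ‖(y : H) - x m‖ := by
      have e3 : x (m+1) = ((h (h^[m] b) : C) : H) := by
        simp only [hx, Function.iterate_succ_apply']
      rw [e3]
      have := hne y (h^[m] b)
      rw [Subtype.dist_eq, Subtype.dist_eq, dist_eq_norm, dist_eq_norm] at this
      exact this
    have hq : u ((h y : H)) (m+1) ≤ u (y : H) m := by
      simp only [hu]
      have h0 : (0:ℝ) ≤ ‖(h y : H) - x (m+1)‖ := norm_nonneg _
      nlinarith
    have := hN m (by omega)
    linarith
  -- infimum
  have hΦne : (φ '' C).Nonempty := ⟨φ x₀, x₀, hx₀, rfl⟩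
  have hΦbdd : BddBelow (φ '' C) := ⟨0, by rintro a ⟨y, -, rfl⟩; exact T3 y⟩
  set μ : ℝ := sInf (φ '' C) with hμ
  have hquad : ∀ y ∈ C, ∀ z ∈ C, ‖y - z‖^2 ≤ 2 * φ y + 2 * φ z - 4 * μ := by
    intro y hy z hz
    have hmC : (2:ℝ)⁻¹ • (y + z) ∈ C := by
      have := hCconv hy hz (by norm_num : (0:ℝ) ≤ 2⁻¹) (by norm_num : (0:ℝ) ≤ 2⁻¹)
        (by norm_num)
      rwa [← smul_add] at this
    have h1 : μ ≤ φ ((2:ℝ)⁻¹ • (y + z)) := csInf_le hΦbdd ⟨_, hmC, rfl⟩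
    have h2 := hmid y z
    linarith
  -- minimizing sequence
  set c : ℕ → ℝ := fun k => 1/((k:ℝ)+1) with hc
  have hcpos : ∀ k, 0 < c k := fun k => by positivity
  have hsel : ∀ k : ℕ, ∃ y, y ∈ C ∧ φ y < μ + c k := by
    intro k
    obtain ⟨a, ⟨y, hyC, rfl⟩, ha⟩ := Real.lt_sInf_add_pos hΦne (hcpos k)
    exact ⟨y, hyC, ha⟩
  choose yseq hyC hyφ using hsel
  have hyy : ∀ j k : ℕ, ‖yseq j - yseq k‖^2 ≤ 2 * c j + 2 * c k := by
    intro j k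
    have := hquad (yseq j) (hyC j) (yseq k) (hyC k)
    have h1 := hyφ j; have h2 := hyφ k
    linarith
  have hcauchy : CauchySeq yseq := by
    rw [Metric.cauchySeq_iff]
    intro ε hε
    obtain ⟨K, hK⟩ := exists_nat_gt (4/ε^2)
    refine ⟨K, fun m hm n hn => ?_⟩
    have h1 : ‖yseq m - yseq n‖^2 ≤ 2 * c m + 2 * c n := hyy m n
    have hcm : c m ≤ c K := by
      apply one_div_le_one_div_of_le (by positivity)
      have : (K:ℝ) ≤ m := by exact_mod_cast hm
      linarith
    have hcn : c n ≤ c K := by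
      apply one_div_le_one_div_of_le (by positivity)
      have : (K:ℝ) ≤ n := by exact_mod_cast hn
      linarith
    have h4 : 4 * c K < ε^2 := by
      have h5 : (4:ℝ) < K * ε^2 := by
        rw [div_lt_iff₀ (by positivity)] at hK; linarith
      have h6 : c K = 1/((K:ℝ)+1) := rfl
      rw [h6, mul_one_div, div_lt_iff₀ (by positivity)]
      nlinarith [sq_nonneg ε]
    rw [dist_eq_norm]
    have h7 : ‖yseq m - yseq n‖^2 < ε^2 := by linarith
    exact lt_of_pow_lt_pow_left₀ 2 (le_of_lt hε) h7
  obtain ⟨ylim, htend⟩ := cauchySeq_tendsto_of_complete hcauchy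
  have hylimC : ylim ∈ C := hCcl.mem_of_tendsto htend (Eventually.of_forall hyC)
  -- phi ylim ≤ μ
  have hcont : ∀ k, φ ylim ≤ φ (yseq k)
      + (2*(‖yseq k - x₀‖ + ρ) + ‖ylim - yseq k‖) * ‖ylim - yseq k‖ := by
    intro k
    set d := ‖ylim - yseq k‖ with hd
    have hd0 : 0 ≤ d := norm_nonneg _
    apply le_of_eps
    intro ε hε
    apply T1
    filter_upwards [T2 (yseq k) ε hε] with n h1
    have h2 : ‖ylim - x n‖ ≤ ‖yseq k - x n‖ + d := by
      calc ‖ylim - x n‖ ≤ ‖ylim - yseq k‖ + ‖yseq k - x n‖ := norm_sub_le_norm_sub_add_norm_sub _ _ _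
        _ = ‖yseq k - x n‖ + d := by rw [hd]; ring
    have h3 : ‖yseq k - x n‖ ≤ ‖yseq k - x₀‖ + ρ := by
      calc ‖yseq k - x n‖ ≤ ‖yseq k - x₀‖ + ‖x₀ - x n‖ := norm_sub_le_norm_sub_add_norm_sub _ _ _
        _ ≤ ‖yseq k - x₀‖ + ρ := by
            have h5 : ‖x₀ - x n‖ ≤ ρ := by rw [norm_sub_rev]; exact horb n
            linarith
    have h4 : u ylim n ≤ u (yseq k) n + (2*(‖yseq k - x₀‖ + ρ) + d) * d := by
      simp only [hu]
      nlinarith [norm_nonneg (ylim - x n), norm_nonneg (yseq k - x n)]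
    linarith
  have hyb : ∀ k, ‖yseq k - x₀‖ ≤ ‖yseq 0 - x₀‖ + 2 := by
    intro k
    have h1 : ‖yseq k - yseq 0‖^2 ≤ 4 := by
      have h0 := hyy k 0
      have h2 : c k ≤ 1 := by
        rw [hc]
        simp only []
        rw [div_le_one (by positivity)]
        have : (0:ℝ) ≤ (k:ℝ) := Nat.cast_nonneg k
        linarith
      have h3 : c 0 ≤ 1 := by
        rw [hc]; norm_num
      linarith
    have h2 : ‖yseq k - yseq 0‖ ≤ 2 := by nlinarith [norm_nonneg (yseq k - yseq 0)]
    calc ‖yseq k - x₀‖ ≤ ‖yseq k - yseq 0‖ + ‖yseq 0 - x₀‖ := norm_sub_le_norm_sub_add_norm_sub _ _ _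
      _ ≤ ‖yseq 0 - x₀‖ + 2 := by linarith
  set B₀ : ℝ := ‖yseq 0 - x₀‖ + 2 with hB₀
  have hcont2 : ∀ k, φ ylim ≤ μ + c k
      + (2*(B₀ + ρ) + ‖ylim - yseq k‖) * ‖ylim - yseq k‖ := by
    intro k
    have h1 := hcont k
    have h2 := hyφ k
    have h3 := hyb k
    have hd0 : 0 ≤ ‖ylim - yseq k‖ := norm_nonneg _
    nlinarith
  have htd : Tendsto (fun k => ‖ylim - yseq k‖) atTop (𝓝 0) := by
    have h1 : Tendsto (fun k => dist (yseq k) ylim) atTop (𝓝 0) :=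
      tendsto_iff_dist_tendsto_zero.mp htend
    have h2 : (fun k => ‖ylim - yseq k‖) = fun k => dist (yseq k) ylim := by
      funext k; rw [dist_eq_norm, ← norm_neg]; simp [neg_sub]
    rwa [h2]
  have hRHS : Tendsto (fun k => μ + c k
      + (2*(B₀ + ρ) + ‖ylim - yseq k‖) * ‖ylim - yseq k‖) atTop (𝓝 μ) := by
    have h1 : Tendsto (fun k : ℕ => μ + c k) atTop (𝓝 (μ + 0)) :=
      tendsto_const_nhds.add tendsto_one_div_add_atTop_nhds_zero_nat
    have h2 : Tendsto (fun k => (2*(B₀ + ρ) + ‖ylim - yseq k‖) * ‖ylim - yseq k‖) atTop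
        (𝓝 ((2*(B₀ + ρ) + 0) * 0)) := (tendsto_const_nhds.add htd).mul htd
    have := h1.add h2
    norm_num at this ⊢
    exact this
  have hphilim : φ ylim ≤ μ := ge_of_tendsto' hRHS (fun k => hcont2 k)
  -- conclude
  set yhat : C := ⟨ylim, hylimC⟩ with hyhat
  have hs := hshift yhat
  have hq := hquad ylim hylimC ((h yhat : H)) (h yhat).2
  have hμφ : μ ≤ φ ylim := csInf_le hΦbdd ⟨ylim, hylimC, rfl⟩
  have hz : ‖ylim - ((h yhat : H))‖^2 ≤ 0 := by
    have : φ ((h yhat : H)) ≤ μ := le_trans hs (by exact hphilim)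
    linarith
  have hzz : ylim - ((h yhat : H)) = 0 := by
    have h1 : ‖ylim - ((h yhat : H))‖^2 = 0 := le_antisymm hz (sq_nonneg _)
    have hn : ‖ylim - ((h yhat : H))‖ = 0 := by
      exact pow_eq_zero_iff two_ne_zero |>.mp h1
    exact norm_eq_zero.mp hn
  refine ⟨yhat, ?_⟩
  apply Subtype.ext
  have : ((h yhat : H)) = ylim := by
    have := sub_eq_zero.mp hzz; exact this.symm
  exact this


lemma norm_smul_unit_sub (r R : ℝ) (hr : 0 < r) (hR : 0 < R) (u u' : H)
    (hu : ‖u‖ = 1) (hu' : ‖u'‖ = 1) :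
    ‖r • u - R • u'‖^2 = r^2 - 2*r*R*⟪u, u'⟫_ℝ + R^2 := by
  rw [norm_sub_sq_real, real_inner_smul_left, real_inner_smul_right, norm_smul, norm_smul,
    hu, hu', Real.norm_eq_abs, Real.norm_eq_abs, abs_of_pos hr, abs_of_pos hR]
  ring

lemma cone_bound {C : Set H} (hCconv : Convex ℝ C) {x₀ : H} (hx₀ : x₀ ∈ C)
    (F : Submodule ℝ H) [CompleteSpace F] {α M : ℝ} (hα : 0 < α)
    (hball : ∀ y : H, y ∈ F → ‖y‖ ≤ α → x₀ + y ∈ C)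
    (hslice : ∀ x ∈ C, x - x₀ ∈ Fᗮ → ‖x - x₀‖ ≤ M)
    {x : H} (hx : x ∈ C) :
    ‖(x - x₀) - (Submodule.orthogonalProjection F (x - x₀) : H)‖
      ≤ (M/α) * (‖(Submodule.orthogonalProjection F (x - x₀) : H)‖ + α) := by
  classical
  set v : H := (Submodule.orthogonalProjection F (x - x₀) : H) with hv
  set w : H := (x - x₀) - v with hw
  have hvF : v ∈ F := SetLike.coe_mem _
  have hwFp : w ∈ Fᗮ := Submodule.sub_starProjection_mem_orthogonal (K := F) (x - x₀)
  by_cases hv0 : v = 0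
  · have h1 : x - x₀ ∈ Fᗮ := by rw [hv0, sub_zero] at hw; rw [← hw]; exact hwFp
    have h2 : ‖x - x₀‖ ≤ M := hslice x hx h1
    have h3 : w = x - x₀ := by rw [hw, hv0, sub_zero]
    rw [h3]
    have : (M/α) * (‖(0:H)‖ + α) = M := by field_simp; simp
    rw [hv0, this]
    exact h2
  · have hvn : 0 < ‖v‖ := norm_pos_iff.mpr hv0
    set lam : ℝ := α/(‖v‖ + α) with hlam
    have hvα : 0 < ‖v‖ + α := by linarith
    have hlam0 : 0 < lam := by positivity
    have hlam1 : lam < 1 := by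
      rw [hlam, div_lt_one hvα]; linarith
    set u : H := -((α/‖v‖) • v) with huu
    have huF : u ∈ F := Submodule.neg_mem _ (Submodule.smul_mem _ _ hvF)
    have hun : ‖u‖ = α := by
      rw [huu, norm_neg, norm_smul, Real.norm_eq_abs,
        abs_of_pos (by positivity : (0:ℝ) < α/‖v‖)]
      field_simp
    have huC : x₀ + u ∈ C := hball u huF (le_of_eq hun)
    set z : H := lam • x + (1 - lam) • (x₀ + u) with hz
    have hzC : z ∈ C := hCconv hx huC (le_of_lt hlam0) (by linarith) (by ring)
    have hxd : x = x₀ + v + w := by rw [hw]; abel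
    have hsc : (1 - lam) * (α/‖v‖) = lam := by
      rw [hlam]; field_simp; ring
    have hkey : z - x₀ = lam • w := by
      have e1 : z - x₀ = lam • w + (lam - (1 - lam) * (α/‖v‖)) • v := by
        rw [hz, huu, hxd]; module
      rw [e1, hsc, sub_self, zero_smul, add_zero]
    have hzFp : z - x₀ ∈ Fᗮ := by rw [hkey]; exact Submodule.smul_mem _ _ hwFp
    have h6 : lam * ‖w‖ ≤ M := by
      have := hslice z hzC hzFp
      rw [hkey, norm_smul, Real.norm_eq_abs, abs_of_pos hlam0] at this
      exact this
    have he : lam * (‖v‖ + α) = α := by rw [hlam]; field_simp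
    have h7 : α * ‖w‖ ≤ M * (‖v‖ + α) := by
      nlinarith [mul_le_mul_of_nonneg_right h6 (le_of_lt hvα), norm_nonneg w]
    rw [div_mul_eq_mul_div, le_div_iff₀ hα]
    linarith [h7]

set_option maxHeartbeats 1000000 in
lemma claimA [CompleteSpace H] {C : Set H} (hCconv : Convex ℝ C) {x₀ : H} (hx₀ : x₀ ∈ C)
    (F : Submodule ℝ H) (hFD : FiniteDimensional ℝ F) {α M : ℝ} (hα : 0 < α) (hM : 0 ≤ M)
    (hball : ∀ y : H, y ∈ F → ‖y‖ ≤ α → x₀ + y ∈ C)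
    (hslice : ∀ x ∈ C, x - x₀ ∈ Fᗮ → ‖x - x₀‖ ≤ M)
    (K : ℝ) (hK : 0 < K) :
    ∃ (P : Set H) (ρ₁ : ℝ), P ⊆ C ∧ P.Finite ∧ 0 < ρ₁ ∧
      ∀ x ∈ C, ρ₁ ≤ ‖x - x₀‖ → ∃ p ∈ P, ‖x - p‖ ≤ ‖x - x₀‖ - K := by
  classical
  haveI := hFD
  haveI : CompleteSpace F := FiniteDimensional.complete ℝ F
  haveI : ProperSpace F := FiniteDimensional.proper ℝ F
  set β : ℝ := M/α with hβdef
  have hβ : 0 ≤ β := div_nonneg hM hα.le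
  set c₀ : ℝ := 1/(2*(1+β)) with hc₀def
  have hc₀ : 0 < c₀ := by positivity
  have hc₀half : c₀ ≤ 1/2 := by
    rw [hc₀def]
    rw [div_le_div_iff₀ (by positivity) (by norm_num)]
    linarith
  set κ : ℝ := c₀^2/2 with hκdef
  have hκ : 0 < κ := by positivity
  have hκ1 : κ ≤ 1 := by nlinarith
  set R : ℝ := 2*K/κ with hRdef
  have hR : 0 < R := by positivity
  have hRκ : R * κ = 2*K := by rw [hRdef]; field_simp
  have hRK : K ≤ R := by nlinarith
  set ρ₁ : ℝ := max (2*β*α + 1) (max R (R^2/(2*K))) with hρ₁def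
  have hρ₁pos : 0 < ρ₁ := lt_of_lt_of_le (by positivity) (le_max_left _ _)
  have hρ₁βα : 2*β*α + 1 ≤ ρ₁ := le_max_left _ _
  have hρ₁R : R ≤ ρ₁ := le_trans (le_max_left _ _) (le_max_right _ _)
  have hρ₁R2 : R^2/(2*K) ≤ ρ₁ := le_trans (le_max_right _ _) (le_max_right _ _)
  set δ : ℝ := c₀^2/8 with hδdef
  set δ₂ : ℝ := c₀^2/4 with hδ₂def
  have hδ : 0 < δ := by positivity
  have hδ₂ : 0 < δ₂ := by positivity
  -- components
  set v : H → H := fun x => (Submodule.orthogonalProjection F (x - x₀) : H) with hvdef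
  set w : H → H := fun x => (x - x₀) - v x with hwdef
  set a : H → H := fun x => ‖x - x₀‖⁻¹ • v x with hadef
  set bb : H → H := fun x => ‖x - x₀‖⁻¹ • w x with hbbdef
  have hvF : ∀ x, v x ∈ F := fun x => SetLike.coe_mem _
  have hwFp : ∀ x, w x ∈ Fᗮ := fun x => Submodule.sub_starProjection_mem_orthogonal (K := F) (x - x₀)
  have haF : ∀ x, a x ∈ F := fun x => Submodule.smul_mem _ _ (hvF x)
  have hbbFp : ∀ x, bb x ∈ Fᗮ := fun x => Submodule.smul_mem _ _ (hwFp x)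
  have hvw : ∀ x, v x + w x = x - x₀ := by intro x; show v x + ((x - x₀) - v x) = x - x₀; abel
  have hpyth : ∀ x, ‖x - x₀‖^2 = ‖v x‖^2 + ‖w x‖^2 := by
    intro x
    have h0 : ⟪v x, w x⟫_ℝ = 0 :=
      Submodule.inner_right_of_mem_orthogonal (hvF x) (hwFp x)
    have h1 := norm_add_sq_real (v x) (w x)
    rw [hvw x, h0] at h1
    linarith
  have hvle : ∀ x, ‖v x‖ ≤ ‖x - x₀‖ := by
    intro x; nlinarith [hpyth x, sq_nonneg (‖w x‖), norm_nonneg (v x), norm_nonneg (x - x₀)]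
  have hwle : ∀ x, ‖w x‖ ≤ ‖x - x₀‖ := by
    intro x; nlinarith [hpyth x, sq_nonneg (‖v x‖), norm_nonneg (w x), norm_nonneg (x - x₀)]
  -- norms of components of far points
  have hfar_pos : ∀ x : H, ρ₁ ≤ ‖x - x₀‖ → 0 < ‖x - x₀‖ := fun x h => lt_of_lt_of_le hρ₁pos h
  have hanorm : ∀ x, ρ₁ ≤ ‖x - x₀‖ → ‖a x‖ = ‖v x‖ / ‖x - x₀‖ := by
    intro x hr
    rw [hadef]
    simp only []
    rw [norm_smul, Real.norm_eq_abs, abs_of_pos (inv_pos.mpr (hfar_pos x hr))]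
    rw [inv_mul_eq_div]
  have hbnorm : ∀ x, ρ₁ ≤ ‖x - x₀‖ → ‖bb x‖ = ‖w x‖ / ‖x - x₀‖ := by
    intro x hr
    rw [hbbdef]
    simp only []
    rw [norm_smul, Real.norm_eq_abs, abs_of_pos (inv_pos.mpr (hfar_pos x hr))]
    rw [inv_mul_eq_div]
  have hale : ∀ x, ρ₁ ≤ ‖x - x₀‖ → ‖a x‖ ≤ 1 := by
    intro x hr
    rw [hanorm x hr, div_le_one (hfar_pos x hr)]
    exact hvle x
  have hble : ∀ x, ρ₁ ≤ ‖x - x₀‖ → ‖bb x‖ ≤ 1 := by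
    intro x hr
    rw [hbnorm x hr, div_le_one (hfar_pos x hr)]
    exact hwle x
  have hcone : ∀ x ∈ C, ‖w x‖ ≤ β * (‖v x‖ + α) :=
    fun x hx => cone_bound hCconv hx₀ F hα hball hslice hx
  have halow : ∀ x ∈ C, ρ₁ ≤ ‖x - x₀‖ → c₀ ≤ ‖a x‖ := by
    intro x hx hr
    by_contra hcon
    push_neg at hcon
    rw [hanorm x hr] at hcon
    have hrpos := hfar_pos x hr
    have h1 : ‖v x‖ < c₀ * ‖x - x₀‖ := by
      rw [div_lt_iff₀ hrpos] at hcon; linarith [hcon]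
    have h2 : ‖x - x₀‖ ≤ ‖v x‖ + ‖w x‖ := by
      calc ‖x - x₀‖ = ‖v x + w x‖ := by rw [hvw x]
        _ ≤ ‖v x‖ + ‖w x‖ := norm_add_le _ _
    have h3 := hcone x hx
    have hc₀β : c₀ * (1 + β) = 1/2 := by
      rw [hc₀def]; field_simp
    have h4 : ‖x - x₀‖ < ‖x - x₀‖ / 2 + β * α := by
      calc ‖x - x₀‖ ≤ ‖v x‖ + ‖w x‖ := h2
        _ ≤ ‖v x‖ + β * (‖v x‖ + α) := by linarith
        _ = (1 + β) * ‖v x‖ + β * α := by ring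
        _ < (1 + β) * (c₀ * ‖x - x₀‖) + β * α := by
            have : (0:ℝ) < 1 + β := by linarith
            nlinarith [h1]
        _ = ‖x - x₀‖ / 2 + β * α := by
            rw [show (1+β) * (c₀ * ‖x - x₀‖) = (c₀ * (1+β)) * ‖x - x₀‖ by ring, hc₀β]; ring
    have h5 : ‖x - x₀‖ < 2 * β * α := by linarith
    linarith [hr, hρ₁βα]
  -- finite net of the unit ball of F
  have hcomp : IsCompact ((Subtype.val) '' (Metric.closedBall (0:F) 1) : Set H) :=
    (isCompact_closedBall (0:F) 1).image continuous_subtype_val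
  obtain ⟨t, hcov⟩ := hcomp.elim_finite_subcover (fun y : H => Metric.ball y δ)
    (fun y => isOpen_ball) (by
      intro y hy
      exact Set.mem_iUnion.mpr ⟨y, Metric.mem_ball_self hδ⟩)
  -- classes and packings
  set SS : H → Set H := fun i => {x | x ∈ C ∧ ρ₁ ≤ ‖x - x₀‖ ∧ a x ∈ Metric.ball i δ}
    with hSSdef
  have hwit : ∀ i : H, ∃ W : Set H, W.Finite ∧ W ⊆ SS i ∧
      ∀ s ∈ SS i, ∃ x' ∈ W, -δ₂ ≤ ⟪bb s, bb x'⟫_ℝ := by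
    intro i
    obtain ⟨T, hT1, hT2, hT3⟩ := packing_lemma (bb '' SS i) 1 δ₂ hδ₂ (by
      rintro s ⟨x, hx, rfl⟩
      exact hble x hx.2.1)
    set f : H → H := fun τ => if hτ : τ ∈ bb '' SS i then hτ.choose else x₀ with hfdef
    refine ⟨f '' T, hT2.image f, ?_, ?_⟩
    · rintro y ⟨τ, hτ, rfl⟩
      have hmem : τ ∈ bb '' SS i := hT1 hτ
      simp only [hfdef, dif_pos hmem]
      exact hmem.choose_spec.1
    · intro s hs
      obtain ⟨τ, hτT, hτin⟩ := hT3 (bb s) ⟨s, hs, rfl⟩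
      have hmem : τ ∈ bb '' SS i := hT1 hτT
      refine ⟨f τ, ⟨τ, hτT, rfl⟩, ?_⟩
      have : bb (f τ) = τ := by
        simp only [hfdef, dif_pos hmem]
        exact hmem.choose_spec.2
      rw [this]
      exact hτin
  choose W hWfin hWsub hWprop using hwit
  -- the finite set P
  set scale : H → H := fun y => x₀ + (R/‖y - x₀‖) • (y - x₀) with hscaledef
  set P : Set H := ⋃ i ∈ (↑t : Set H), scale '' (W i) with hPdef
  have hscaleC : ∀ y ∈ C, ρ₁ ≤ ‖y - x₀‖ → scale y ∈ C := by
    intro y hy hr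
    have hrpos := hfar_pos y hr
    set cc : ℝ := R/‖y - x₀‖ with hccdef
    have hcc0 : 0 ≤ cc := by positivity
    have hcc1 : cc ≤ 1 := by
      rw [hccdef, div_le_one hrpos]; linarith [hρ₁R, hr]
    have he : scale y = (1 - cc) • x₀ + cc • y := by
      rw [hscaledef]; simp only []; module
    rw [he]
    exact hCconv hx₀ hy (by linarith) hcc0 (by ring)
  have hPC : P ⊆ C := by
    rw [hPdef]
    rintro p hp
    simp only [Set.mem_iUnion] at hp
    obtain ⟨i, _, y, hyW, rfl⟩ := hp
    have hyS := hWsub i hyW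
    exact hscaleC y hyS.1 hyS.2.1
  have hPfin : P.Finite := Set.Finite.biUnion t.finite_toSet (fun i _ => (hWfin i).image _)
  refine ⟨P, ρ₁, hPC, hPfin, hρ₁pos, ?_⟩
  -- main estimate
  intro x hx hr
  have hrpos := hfar_pos x hr
  -- find the net cell
  have haxmem : a x ∈ (Subtype.val) '' (Metric.closedBall (0:F) 1) := by
    refine ⟨⟨a x, haF x⟩, ?_, rfl⟩
    rw [Metric.mem_closedBall, dist_zero_right]
    exact hale x hr
  obtain ⟨i, hit, hball_i⟩ := by
    have := hcov haxmem
    simpa only [Set.mem_iUnion, exists_prop] using this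
  have hxS : x ∈ SS i := ⟨hx, hr, hball_i⟩
  obtain ⟨x', hx'W, hinner_b⟩ := hWprop i x hxS
  have hx'S : x' ∈ SS i := hWsub i hx'W
  have hx'C : x' ∈ C := hx'S.1
  have hr' : ρ₁ ≤ ‖x' - x₀‖ := hx'S.2.1
  have hr'pos := hfar_pos x' hr'
  set p : H := scale x' with hpd
  have hpP : p ∈ P := by
    rw [hPdef]
    simp only [Set.mem_iUnion]
    exact ⟨i, hit, x', hx'W, rfl⟩
  refine ⟨p, hpP, ?_⟩
  -- inner product estimates
  have haa : c₀^2 - 2*δ ≤ ⟪a x, a x'⟫_ℝ := by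
    have h1 : ⟪a x, a x'⟫_ℝ = ⟪a x, a x⟫_ℝ + ⟪a x, a x' - a x⟫_ℝ := by
      rw [← inner_add_right]; congr 1; abel
    have h2 : ⟪a x, a x⟫_ℝ = ‖a x‖^2 := real_inner_self_eq_norm_sq _
    have h3 : c₀^2 ≤ ‖a x‖^2 := by
      have := halow x hx hr
      nlinarith [hc₀]
    have h4 : ‖a x - a x'‖ < 2*δ := by
      have d1 : dist (a x) i < δ := hball_i
      have d2 : dist (a x') i < δ := hx'S.2.2
      calc ‖a x - a x'‖ = dist (a x) (a x') := (dist_eq_norm _ _).symm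
        _ ≤ dist (a x) i + dist i (a x') := dist_triangle _ _ _
        _ < δ + δ := by rw [dist_comm i (a x')]; linarith
        _ = 2*δ := by ring
    have h5 : ⟪a x, a x - a x'⟫_ℝ ≤ ‖a x‖ * ‖a x - a x'‖ := real_inner_le_norm _ _
    have h6 : ⟪a x, a x' - a x⟫_ℝ = -⟪a x, a x - a x'⟫_ℝ := by
      rw [← inner_neg_right]; congr 1; abel
    have h7 : ‖a x‖ * ‖a x - a x'‖ ≤ 2*δ := by
      have := hale x hr
      nlinarith [norm_nonneg (a x - a x'), norm_nonneg (a x)]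
    rw [h1, h2, h6]
    linarith
  -- decomposition of unit vectors
  have hux : ‖x - x₀‖⁻¹ • (x - x₀) = a x + bb x := by
    rw [hadef, hbbdef]
    simp only []
    rw [← smul_add, hvw x]
  have hux' : ‖x' - x₀‖⁻¹ • (x' - x₀) = a x' + bb x' := by
    rw [hadef, hbbdef]
    simp only []
    rw [← smul_add, hvw x']
  have hcross1 : ⟪a x, bb x'⟫_ℝ = 0 :=
    Submodule.inner_right_of_mem_orthogonal (haF x) (hbbFp x')
  have hcross2 : ⟪bb x, a x'⟫_ℝ = 0 :=
    Submodule.inner_left_of_mem_orthogonal (haF x') (hbbFp x)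
  have hinner : κ ≤ ⟪‖x - x₀‖⁻¹ • (x - x₀), ‖x' - x₀‖⁻¹ • (x' - x₀)⟫_ℝ := by
    rw [hux, hux', inner_add_left, inner_add_right, inner_add_right,
      hcross1, hcross2]
    have : κ = c₀^2 - 2*δ + (-δ₂) := by rw [hκdef, hδdef, hδ₂def]; ring
    rw [this]
    have hbbb : -δ₂ ≤ ⟪bb x, bb x'⟫_ℝ := hinner_b
    linarith
  -- norm computation
  have hunx : ‖‖x - x₀‖⁻¹ • (x - x₀)‖ = 1 := by
    rw [norm_smul, Real.norm_eq_abs, abs_of_pos (inv_pos.mpr hrpos)]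
    field_simp
  have hunx' : ‖‖x' - x₀‖⁻¹ • (x' - x₀)‖ = 1 := by
    rw [norm_smul, Real.norm_eq_abs, abs_of_pos (inv_pos.mpr hr'pos)]
    field_simp
  have hxp : x - p = ‖x - x₀‖ • (‖x - x₀‖⁻¹ • (x - x₀)) - R • (‖x' - x₀‖⁻¹ • (x' - x₀)) := by
    rw [hpd, hscaledef]
    simp only []
    rw [smul_smul, smul_smul]
    rw [mul_inv_cancel₀ (ne_of_gt hrpos), one_smul]
    rw [show R * ‖x' - x₀‖⁻¹ = R/‖x' - x₀‖ from (div_eq_mul_inv _ _).symm]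
    abel
  have hnormsq : ‖x - p‖^2 = ‖x - x₀‖^2
      - 2*‖x - x₀‖*R*⟪‖x - x₀‖⁻¹ • (x - x₀), ‖x' - x₀‖⁻¹ • (x' - x₀)⟫_ℝ + R^2 := by
    rw [hxp]
    exact norm_smul_unit_sub _ _ hrpos hR _ _ hunx hunx'
  have hrbig : R^2/(2*K) ≤ ‖x - x₀‖ := le_trans hρ₁R2 hr
  have hfinal : ‖x - p‖^2 ≤ (‖x - x₀‖ - K)^2 := by
    rw [hnormsq]
    have h2 : 0 ≤ 2*‖x - x₀‖*R := by positivity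
    have h1 : 2*‖x - x₀‖*R*κ
        ≤ 2*‖x - x₀‖*R*⟪‖x - x₀‖⁻¹ • (x - x₀), ‖x' - x₀‖⁻¹ • (x' - x₀)⟫_ℝ := by
      nlinarith [hinner]
    have h3 : R^2 ≤ 2*K*‖x - x₀‖ := by
      rw [div_le_iff₀ (by positivity : (0:ℝ) < 2*K)] at hrbig
      linarith
    have h4 : 2*‖x - x₀‖*R*κ = 2*‖x - x₀‖*(2*K) := by
      rw [show 2*‖x - x₀‖*R*κ = 2*‖x - x₀‖*(R*κ) from by ring, hRκ]
    have h5 : (‖x - x₀‖ - K)^2 = ‖x - x₀‖^2 - 2*K*‖x - x₀‖ + K^2 := by ring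
    have h6 : 0 ≤ K^2 := sq_nonneg K
    linarith
  have hrK : 0 ≤ ‖x - x₀‖ - K := by
    have : K ≤ ρ₁ := le_trans hRK hρ₁R
    linarith
  exact (pow_le_pow_iff_left₀ (norm_nonneg _) hrK two_ne_zero).mp hfinal

set_option maxHeartbeats 2000000 in
/-- On a closed, convex, somewhat bounded set `C` in a separable infinite-dimensional
Hilbert space, there is a dense open set `ℛ ⊆ 𝒩(C)` such that every `f ∈ ℛ` has a
fixed point. -/
theorem exists_denseOpen_fixedPoint [CompleteSpace H] [TopologicalSpace.SeparableSpace H]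
    (hH : ¬ FiniteDimensional ℝ H) (C : Set H) (hCcl : IsClosed C) (hCconv : Convex ℝ C)
    (hsb : SomewhatBounded C) :
    ∃ R : Set (Nonexp C), IsOpen R ∧ Dense R ∧ ∀ f ∈ R, ∃ x : C, f.1 x = x := by
  classical
  obtain ⟨x₀, hx₀, F, hFD, α, hα, hballIm, hbddIm⟩ := hsb
  have hball : ∀ y : H, y ∈ F → ‖y‖ ≤ α → x₀ + y ∈ C := by
    intro y hyF hyn
    obtain ⟨c, hcC, hc⟩ := hballIm ⟨hyF, hyn⟩
    have : c = x₀ + y := by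
      simp only at hc
      rw [← hc]; abel
    rw [← this]; exact hcC
  obtain ⟨M₀, hM₀⟩ := isBounded_iff_forall_norm_le.mp hbddIm
  set M : ℝ := max M₀ 0 with hMdef
  have hM : 0 ≤ M := le_max_right _ _
  have hslice : ∀ x ∈ C, x - x₀ ∈ Fᗮ → ‖x - x₀‖ ≤ M := by
    intro x hx hmem
    have : x - x₀ ∈ (Fᗮ : Set H) ∩ ((· - x₀) '' C) := ⟨hmem, ⟨x, hx, rfl⟩⟩
    exact le_trans (hM₀ _ this) (le_max_left _ _)
  haveI : Nonempty ↥C := ⟨⟨x₀, hx₀⟩⟩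
  haveI : CompleteSpace ↥C := hCcl.completeSpace_coe
  -- the dense open set
  refine ⟨interior {f : Nonexp C | ∃ x : C, f.1 x = x}, isOpen_interior, ?_,
    fun f hf => ?_⟩
  swap
  · have h1 : f ∈ {f : Nonexp C | ∃ x : C, f.1 x = x} := interior_subset hf
    exact h1
  rw [dense_iff_inter_open]
  intro U hU hUne
  obtain ⟨f, hfU⟩ := hUne
  obtain ⟨V, hV, hVeq⟩ := isOpen_induced_iff.mp hU
  have hfV : f.1 ∈ V := by rw [← hVeq] at hfU; exact hfU
  obtain ⟨I, usets, hI, hsub⟩ := isOpen_pi_iff.mp hV f.1 hfV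
  -- radii
  have hballs : ∀ i : ↥C, ∃ ε : ℝ, 0 < ε ∧ (i ∈ I → Metric.ball (f.1 i) ε ⊆ usets i) := by
    intro i
    by_cases hi : i ∈ I
    · obtain ⟨ε, hε, hb⟩ := Metric.isOpen_iff.mp (hI i hi).1 (f.1 i) (hI i hi).2
      exact ⟨ε, hε, fun _ => hb⟩
    · exact ⟨1, one_pos, fun h => absurd h hi⟩
  choose εf hεf hεball using hballs
  set Nsup : ℝ := if h : I.Nonempty then I.sup' h (fun i => ‖(f.1 i : H) - x₀‖) else 0
    with hNsup
  set N : ℝ := max Nsup 0 + 1 with hNdef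
  have hN1 : 1 ≤ N := by
    rw [hNdef]; have := le_max_right Nsup 0; linarith
  have hN0 : 0 ≤ N := by linarith
  have hNi : ∀ i ∈ I, ‖(f.1 i : H) - x₀‖ ≤ N := by
    intro i hi
    have h1 : Nsup = I.sup' ⟨i, hi⟩ (fun i => ‖(f.1 i : H) - x₀‖) := by
      rw [hNsup, dif_pos ⟨i, hi⟩]
    have h2 : ‖(f.1 i : H) - x₀‖ ≤ Nsup := by
      rw [h1]; exact Finset.le_sup' (fun i : ↥C => ‖(f.1 i : H) - x₀‖) hi
    have := le_max_left Nsup 0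
    rw [hNdef]; linarith
  set εm : ℝ := if h : I.Nonempty then I.inf' h εf else 1 with hεm
  have hεmpos : 0 < εm := by
    rw [hεm]; split_ifs with h
    · exact (Finset.lt_inf'_iff h).mpr fun i _ => hεf i
    · norm_num
  have hεmi : ∀ i ∈ I, εm ≤ εf i := by
    intro i hi
    rw [hεm, dif_pos ⟨i, hi⟩]
    exact Finset.inf'_le _ hi
  set σ : ℝ := min (1/2) (εm/(2*N)) with hσdef
  have hσpos : 0 < σ := lt_min (by norm_num) (by positivity)
  have hσhalf : σ ≤ 1/2 := min_le_left _ _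
  have hσN : σ * N < εm := by
    have h1 : σ ≤ εm/(2*N) := min_le_right _ _
    have hNpos : (0:ℝ) < N := by linarith
    have h2 : σ * N ≤ (εm/(2*N)) * N := mul_le_mul_of_nonneg_right h1 (le_of_lt hNpos)
    have h3 : (εm/(2*N)) * N = εm/2 := by field_simp
    have h4 : σ * N ≤ εm/2 := by rw [← h3]; exact h2
    have h5 : εm/2 < εm := by linarith [hεmpos]
    exact lt_of_le_of_lt h4 h5
  -- the contraction g
  have hmemC : ∀ y : H, y ∈ C → x₀ + (1-σ) • truncBall N (y - x₀) ∈ C := by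
    intro y hy
    unfold truncBall
    split_ifs with h
    · have he : x₀ + (1-σ) • (y - x₀) = σ • x₀ + (1-σ) • y := by module
      rw [he]
      exact hCconv hx₀ hy (by linarith) (by linarith) (by ring)
    · push_neg at h
      have hr : 0 < ‖y - x₀‖ := lt_of_le_of_lt hN0 h
      set cc : ℝ := (1-σ) * (N/‖y - x₀‖) with hccdef
      have hcc0 : 0 ≤ cc := by
        apply mul_nonneg (by linarith)
        positivity
      have hcc1 : cc ≤ 1 := by
        have h1 : N/‖y - x₀‖ ≤ 1 := by rw [div_le_one hr]; linarith
        nlinarith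
      have he : x₀ + (1-σ) • (N/‖y - x₀‖) • (y - x₀) = (1 - cc) • x₀ + cc • y := by
        rw [smul_smul, ← hccdef]; module
      rw [he]
      exact hCconv hx₀ hy (by linarith) hcc0 (by ring)
  set gfun : ↥C → ↥C := fun z =>
    ⟨x₀ + (1-σ) • truncBall N ((f.1 z : H) - x₀), hmemC _ (f.1 z).2⟩ with hgfun
  have hgdist : ∀ x y : ↥C, dist (gfun x) (gfun y) ≤ (1-σ) * dist x y := by
    intro x y
    rw [Subtype.dist_eq, dist_eq_norm]
    have e1 : ((gfun x : H)) - ((gfun y : H))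
        = (1-σ) • (truncBall N ((f.1 x : H) - x₀) - truncBall N ((f.1 y : H) - x₀)) := by
      rw [hgfun]; simp only []; rw [smul_sub]; abel
    rw [e1, norm_smul, Real.norm_eq_abs, abs_of_nonneg (by linarith : (0:ℝ) ≤ 1-σ)]
    have h2 : ‖truncBall N ((f.1 x : H) - x₀) - truncBall N ((f.1 y : H) - x₀)‖
        ≤ ‖((f.1 x : H) - x₀) - ((f.1 y : H) - x₀)‖ := truncBall_nonexpansive N hN0 _ _
    have h3 : ‖((f.1 x : H) - x₀) - ((f.1 y : H) - x₀)‖ = dist (f.1 x) (f.1 y) := by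
      rw [Subtype.dist_eq, dist_eq_norm]; congr 1; abel
    have h4 : dist (f.1 x) (f.1 y) ≤ dist x y := f.2 x y
    have h5 : 0 ≤ (1:ℝ) - σ := by linarith
    calc (1-σ) * ‖truncBall N ((f.1 x : H) - x₀) - truncBall N ((f.1 y : H) - x₀)‖
        ≤ (1-σ) * dist (f.1 x) (f.1 y) := by rw [← h3]; exact mul_le_mul_of_nonneg_left h2 h5
      _ ≤ (1-σ) * dist x y := mul_le_mul_of_nonneg_left h4 h5
  have hgne : ∀ x y : ↥C, dist (gfun x) (gfun y) ≤ dist x y := by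
    intro x y
    calc dist (gfun x) (gfun y) ≤ (1-σ) * dist x y := hgdist x y
      _ ≤ 1 * dist x y := mul_le_mul_of_nonneg_right (by linarith) dist_nonneg
      _ = dist x y := one_mul _
  set Kc : NNReal := ⟨1-σ, by linarith⟩ with hKc
  have hcontr : ContractingWith Kc gfun := by
    constructor
    · rw [← NNReal.coe_lt_coe]
      show (1:ℝ) - σ < (1 : NNReal)
      rw [NNReal.coe_one]
      linarith
    · rw [lipschitzWith_iff_dist_le_mul]
      intro x y
      exact hgdist x y
  set b : ↥C := ContractingWith.fixedPoint gfun hcontr with hbdef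
  have hbfix : gfun b = b := hcontr.fixedPoint_isFixedPt
  have hgrange : ∀ z : ↥C, ‖(gfun z : H) - x₀‖ ≤ N := by
    intro z
    have e1 : (gfun z : H) - x₀ = (1-σ) • truncBall N ((f.1 z : H) - x₀) := by
      rw [hgfun]; simp only []; abel
    rw [e1, norm_smul, Real.norm_eq_abs, abs_of_nonneg (by linarith : (0:ℝ) ≤ 1-σ)]
    have h2 := truncBall_norm_le N hN0 ((f.1 z : H) - x₀)
    nlinarith
  -- g is close to f on I
  have hgclose : ∀ i ∈ I, dist (gfun i) (f.1 i) < εf i := by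
    intro i hi
    have htr : truncBall N ((f.1 i : H) - x₀) = (f.1 i : H) - x₀ :=
      truncBall_eq_self (hNi i hi)
    have e1 : (gfun i : H) - (f.1 i : H) = -(σ • ((f.1 i : H) - x₀)) := by
      rw [hgfun]; simp only []; rw [htr]; module
    rw [Subtype.dist_eq, dist_eq_norm, e1, norm_neg, norm_smul, Real.norm_eq_abs,
      abs_of_pos hσpos]
    calc σ * ‖(f.1 i : H) - x₀‖ ≤ σ * N := by
          have := hNi i hi; nlinarith
      _ < εm := hσN
      _ ≤ εf i := hεmi i hi
  -- claim A
  obtain ⟨P, ρ₁, hPC, hPfin, hρ₁pos, hPprop⟩ := claimA hCconv hx₀ F hFD hα hM hball hslice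
    (N + 4) (by linarith)
  -- the witness open set
  set W : Set (Nonexp C) := {h | dist (h.1 b) b < 1}
    ∩ ⋂ z ∈ (Subtype.val ⁻¹' P : Set ↥C), {h : Nonexp C | dist (h.1 z) (gfun z) < 1}
    with hWdef
  have hPzfin : (Subtype.val ⁻¹' P : Set ↥C).Finite :=
    hPfin.preimage (Set.injOn_of_injective Subtype.val_injective)
  have hWopen : IsOpen W := by
    apply IsOpen.inter
    · have : {h : Nonexp C | dist (h.1 b) b < 1}
          = (fun h : Nonexp C => h.1 b) ⁻¹' (Metric.ball b 1) := by
        ext h; simp [Metric.mem_ball]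
      rw [this]
      exact (isOpen_ball).preimage ((continuous_apply b).comp continuous_subtype_val)
    · apply hPzfin.isOpen_biInter
      intro z hz
      have : {h : Nonexp C | dist (h.1 z) (gfun z) < 1}
          = (fun h : Nonexp C => h.1 z) ⁻¹' (Metric.ball (gfun z) 1) := by
        ext h; simp [Metric.mem_ball]
      rw [this]
      exact (isOpen_ball).preimage ((continuous_apply z).comp continuous_subtype_val)
  -- every element of W has a fixed point
  have hWfix : W ⊆ {f : Nonexp C | ∃ x : C, f.1 x = x} := by
    rintro h ⟨hh1, hh2⟩
    simp only [Set.mem_iInter] at hh2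
    have himg : ∀ z : ↥C, (z : H) ∈ P → ‖(h.1 z : H) - x₀‖ ≤ N + 2 := by
      intro z hz
      have h1 : dist (h.1 z) (gfun z) < 1 := hh2 z hz
      have h2 : ‖(h.1 z : H) - x₀‖ ≤ ‖(h.1 z : H) - (gfun z : H)‖ + ‖(gfun z : H) - x₀‖ :=
        norm_sub_le_norm_sub_add_norm_sub _ _ _
      have h3 : ‖(h.1 z : H) - (gfun z : H)‖ = dist (h.1 z) (gfun z) := by
        rw [Subtype.dist_eq, dist_eq_norm]
      have h4 := hgrange z
      rw [h3] at h2
      linarith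
    have hitne : ∀ n : ℕ, ∀ x y : ↥C, dist (h.1^[n] x) (h.1^[n] y) ≤ dist x y := by
      intro n
      induction n with
      | zero => intro x y; simp
      | succ n ih =>
        intro x y
        rw [Function.iterate_succ_apply', Function.iterate_succ_apply']
        exact le_trans (h.2 _ _) (ih x y)
    have hstep : ∀ n : ℕ, dist (h.1^[n+1] b) (h.1^[n] b) ≤ dist (h.1 b) b := by
      intro n
      rw [Function.iterate_succ_apply]
      exact hitne n (h.1 b) b
    set ρ : ℝ := max ρ₁ ‖(b : H) - x₀‖ with hρdef
    have hρ₁ρ : ρ₁ ≤ ρ := by rw [hρdef]; exact le_max_left _ _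
    have horb : ∀ n : ℕ, ‖(↑(h.1^[n] b) : H) - x₀‖ ≤ ρ := by
      intro n
      induction n with
      | zero =>
        simp only [Function.iterate_zero_apply]
        rw [hρdef]
        exact le_max_right _ _
      | succ n ih =>
        by_contra hcon
        push_neg at hcon
        set z : ↥C := h.1^[n+1] b with hzdef
        have hzr : ρ₁ ≤ ‖(z : H) - x₀‖ := le_trans hρ₁ρ (le_of_lt hcon)
        obtain ⟨p, hpP, hpull⟩ := hPprop (z : H) z.2 hzr
        set ph : ↥C := ⟨p, hPC hpP⟩ with hph
        have est1 : ‖(h.1 z : H) - x₀‖ ≤ (‖(z : H) - x₀‖ - (N+4)) + (N+2) := by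
          have h2 : ‖(h.1 z : H) - x₀‖
              ≤ ‖(h.1 z : H) - (h.1 ph : H)‖ + ‖(h.1 ph : H) - x₀‖ :=
            norm_sub_le_norm_sub_add_norm_sub _ _ _
          have h3 : ‖(h.1 z : H) - (h.1 ph : H)‖ = dist (h.1 z) (h.1 ph) := by
            rw [Subtype.dist_eq, dist_eq_norm]
          have h4 : dist (h.1 z) (h.1 ph) ≤ dist z ph := h.2 z ph
          have h5 : dist z ph = ‖(z : H) - p‖ := by
            rw [Subtype.dist_eq, dist_eq_norm]
          have h6 := himg ph hpP
          rw [h3] at h2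
          rw [h5] at h4
          linarith
        have est2 : dist (h.1 z) z < 1 := by
          have e1 : h.1 z = h.1^[n+2] b := by
            rw [hzdef, ← Function.iterate_succ_apply' h.1 (n+1) b]
          rw [e1, hzdef]
          exact lt_of_le_of_lt (hstep (n+1)) hh1
        have est3 : ‖(z : H) - x₀‖ - 1 < ‖(h.1 z : H) - x₀‖ := by
          have h2 : ‖(z : H) - x₀‖ ≤ ‖(z : H) - (h.1 z : H)‖ + ‖(h.1 z : H) - x₀‖ :=
            norm_sub_le_norm_sub_add_norm_sub _ _ _
          have h3 : ‖(z : H) - (h.1 z : H)‖ = dist (h.1 z) z := by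
            rw [Subtype.dist_eq, dist_eq_norm, norm_sub_rev]
          rw [h3] at h2
          linarith
        linarith
    obtain ⟨x, hx⟩ := fixedPoint_of_boundedOrbit hCcl hCconv hx₀ h.1 h.2 b ρ horb
    exact ⟨x, hx⟩
  -- g is in W
  set gel : Nonexp C := ⟨gfun, hgne⟩ with hgel
  have hgW : gel ∈ W := by
    constructor
    · show dist (gfun b) b < 1
      rw [hbfix]
      simp
    · simp only [Set.mem_iInter]
      intro z hz
      show dist (gfun z) (gfun z) < 1
      simp
  -- g is in U
  have hgU : gel ∈ U := by
    rw [← hVeq]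
    show gel.1 ∈ V
    apply hsub
    rw [Set.mem_pi]
    intro i hi
    apply hεball i hi
    rw [Metric.mem_ball]
    exact hgclose i hi
  -- conclude density
  refine ⟨gel, hgU, ?_⟩
  rw [mem_interior]
  exact ⟨W, hWfix, hWopen, hgW⟩
end

section
/- Let C be a LUR (locally uniformly rotund) set in a real Hilbert space H, and let x, y, z ∈ C with y ∈ ∂C and x ≠ y ≠ z. If r, s > 0 satisfy r ≤ ‖x − y‖ ≤ s, then ⟨(z − y)/‖z − y‖, (x − y)/‖x − y‖⟩ ≥ − s / √(s² + 4·δ_C(x,r)²), where δ_C(x,r) is the modulus of convexity of C at x. -/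
open Metric RealInnerProductSpace

variable {H : Type*} [NormedAddCommGroup H] [InnerProductSpace ℝ H]

/-- The modulus of convexity of `C` at `x`:
`δ_C(x,ε) = inf { dist((x+y)/2, ∂C) : y ∈ C, ‖y−x‖ ≥ ε }`. -/
noncomputable def lurModulus (C : Set H) (x : H) (ε : ℝ) : ℝ :=
  sInf ((fun y => infDist ((2 : ℝ)⁻¹ • (x + y)) (frontier C)) '' {y ∈ C | ε ≤ ‖y - x‖})

/-- `C` is locally uniformly rotund (LUR): it is convex, has nonempty boundary, and
`δ_C(x,ε) > 0` for every `x ∈ C` and every `ε ∈ (0, Δ_C(x))`; here the condition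
`ε < Δ_C(x) = sup{‖y−x‖ : y ∈ C}` is expressed as `∃ y ∈ C, ε < ‖y − x‖`. -/
def IsLUR (C : Set H) : Prop :=
  Convex ℝ C ∧ (frontier C).Nonempty ∧
    ∀ x ∈ C, ∀ ε : ℝ, 0 < ε → (∃ y ∈ C, ε < ‖y - x‖) → 0 < lurModulus C x ε

/-- If `C` is LUR, `x, y, z ∈ C` with `y ∈ ∂C`, `x ≠ y ≠ z`, and `r ≤ ‖x − y‖ ≤ s` with
`r, s > 0`, then `⟪(z−y)/‖z−y‖, (x−y)/‖x−y‖⟫ ≥ −s/√(s² + 4·δ_C(x,r)²)`. -/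
theorem inner_ge_of_lur (C : Set H) (hC : IsLUR C) (x y z : H)
    (hx : x ∈ C) (hy : y ∈ C) (hz : z ∈ C) (hyb : y ∈ frontier C)
    (hxy : x ≠ y) (hzy : z ≠ y) (r s : ℝ) (hr : 0 < r) (hs : 0 < s)
    (hrxy : r ≤ ‖x - y‖) (hxys : ‖x - y‖ ≤ s) :
    -(s / Real.sqrt (s ^ 2 + 4 * lurModulus C x r ^ 2)) ≤
      ⟪‖z - y‖⁻¹ • (z - y), ‖x - y‖⁻¹ • (x - y)⟫ := by
  have hconv : Convex ℝ C := hC.1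
  set δ := lurModulus C x r with hδdef
  have hδ0 : 0 ≤ δ := by
    apply Real.sInf_nonneg
    rintro _ ⟨w, -, rfl⟩
    exact infDist_nonneg
  have hd : 0 < ‖x - y‖ := norm_pos_iff.2 (sub_ne_zero.2 hxy)
  have hL : 0 < ‖z - y‖ := norm_pos_iff.2 (sub_ne_zero.2 hzy)
  set d := ‖x - y‖ with hdd
  set L := ‖z - y‖ with hLL
  set P : ℝ := ⟪x - y, z - y⟫ with hPdef
  -- Key geometric inequality
  have hkey : ∀ τ : ℝ, 0 ≤ τ → δ ≤ ‖(2:ℝ)⁻¹ • (x - y) + τ • (z - y)‖ := by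
    intro τ hτ
    rcases eq_or_lt_of_le hδ0 with h0 | hδpos
    · rw [← h0]; exact norm_nonneg _
    by_contra hcon
    push_neg at hcon
    set m := (2 : ℝ)⁻¹ • (x + y) with hm
    have hmC : m ∈ C := by
      have := hconv hx hy (by norm_num : (0:ℝ) ≤ 2⁻¹) (by norm_num : (0:ℝ) ≤ 2⁻¹)
        (by norm_num)
      rwa [← smul_add] at this
    have hδm : δ ≤ infDist m (frontier C) := by
      refine csInf_le ⟨0, ?_⟩ ?_
      · rintro _ ⟨w, -, rfl⟩; exact infDist_nonneg
      · exact ⟨y, ⟨hy, by rwa [norm_sub_rev]⟩, rfl⟩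
    have hmi : m ∈ interior C := by
      have hmf : m ∉ frontier C := by
        intro h
        have := infDist_zero_of_mem h
        linarith
      have hmc : m ∈ closure C := subset_closure hmC
      rw [← closure_diff_interior] at hmf
      simp only [Set.mem_diff, hmc, true_and, not_not] at hmf
      exact hmf
    have hball : ball m δ ⊆ interior C := by
      refine IsPreconnected.subset_left_of_subset_union (u := interior C)
        (v := (closure C)ᶜ) isOpen_interior
        isClosed_closure.isOpen_compl ?_ ?_ ⟨m, mem_ball_self hδpos, hmi⟩
        (convex_ball m δ).isPreconnected
      · exact Set.disjoint_compl_right_iff_subset.2 interior_subset_closure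
      · intro p hp
        by_cases hpc : p ∈ closure C
        · left
          have hpf : p ∉ frontier C := by
            intro h
            have h1 : infDist m (frontier C) ≤ dist m p := infDist_le_dist_of_mem h
            rw [mem_ball, dist_comm] at hp
            linarith
          rw [← closure_diff_interior] at hpf
          simp only [Set.mem_diff, hpc, true_and, not_not] at hpf
          exact hpf
        · right; exact hpc
    set p := y - τ • (z - y) with hp
    have hpm : p ∈ ball m δ := by
      rw [mem_ball, dist_eq_norm]
      have hpe : p - m = -((2:ℝ)⁻¹ • (x - y) + τ • (z - y)) := by
        rw [hp, hm]; module
      rw [hpe, norm_neg]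
      exact hcon
    have hpi : p ∈ interior C := hball hpm
    have h1τ : (0:ℝ) < 1 + τ := by linarith
    have hcombo : (1/(1+τ)) • p + (τ/(1+τ)) • z = y := by
      rw [hp]
      match_scalars <;> field_simp <;> ring
    have hyi : y ∈ interior C := by
      rw [← hcombo]
      exact hconv.combo_interior_closure_mem_interior hpi (subset_closure hz)
        (by positivity) (by positivity) (by field_simp)
    rw [← closure_diff_interior] at hyb
    exact hyb.2 hyi
  -- squared form
  have hkey2 : ∀ τ : ℝ, 0 ≤ τ → δ ^ 2 ≤ d ^ 2 / 4 + τ * P + τ ^ 2 * L ^ 2 := by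
    intro τ hτ
    have h := hkey τ hτ
    have hn : ‖(2:ℝ)⁻¹ • (x - y) + τ • (z - y)‖ ^ 2 = d ^ 2 / 4 + τ * P + τ ^ 2 * L ^ 2 := by
      have hzx : (inner ℝ (z - y) (x - y) : ℝ) = P := by
        rw [hPdef]; exact real_inner_comm _ _
      have hxz : (inner ℝ (x - y) (z - y) : ℝ) = P := hPdef.symm
      rw [← real_inner_self_eq_norm_sq, inner_add_add_self]
      simp only [real_inner_smul_left, real_inner_smul_right]
      simp only [real_inner_self_eq_norm_sq, hzx, hxz, ← hdd, ← hLL]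
      ring
    calc δ ^ 2 ≤ ‖(2:ℝ)⁻¹ • (x - y) + τ • (z - y)‖ ^ 2 := by
          exact pow_le_pow_left₀ hδ0 h 2
      _ = _ := hn
  have hinner : (⟪‖z - y‖⁻¹ • (z - y), ‖x - y‖⁻¹ • (x - y)⟫ : ℝ) = P / (L * d) := by
    rw [real_inner_smul_left, real_inner_smul_right, real_inner_comm, ← hPdef, ← hdd, ← hLL]
    field_simp
  rw [hinner]
  have hSpos : (0:ℝ) < s ^ 2 + 4 * δ ^ 2 := by positivity
  set S := Real.sqrt (s ^ 2 + 4 * δ ^ 2) with hSdef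
  have hS : 0 < S := Real.sqrt_pos.2 hSpos
  have hS2 : S ^ 2 = s ^ 2 + 4 * δ ^ 2 := Real.sq_sqrt hSpos.le
  rcases le_or_gt 0 P with hP | hP
  · have h1 : 0 ≤ P / (L * d) := by positivity
    have h2 : 0 ≤ s / S := by positivity
    linarith
  · -- instantiate τ = -P/(2 L²)
    have hP2 : P ^ 2 ≤ L ^ 2 * (d ^ 2 - 4 * δ ^ 2) := by
      have h := hkey2 (-P / (2 * L ^ 2))
        (div_nonneg (by linarith) (by positivity))
      have hL2 : (0:ℝ) < L ^ 2 := by positivity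
      have h4 : (0:ℝ) < 4 * L ^ 2 := by positivity
      have he : d ^ 2 / 4 + (-P / (2 * L ^ 2)) * P + (-P / (2 * L ^ 2)) ^ 2 * L ^ 2
          = d ^ 2 / 4 - P ^ 2 / (4 * L ^ 2) := by
        field_simp
        ring
      rw [he] at h
      linarith [mul_le_mul_of_nonneg_right h h4.le,
        div_mul_cancel₀ (P ^ 2) (ne_of_gt h4)]
    rw [show -(s / S) = (-s) / S by ring, div_le_div_iff₀ hS (by positivity : (0:ℝ) < L * d)]
    have hds : d ^ 2 ≤ s ^ 2 := by nlinarith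
    have h1 : P ^ 2 * S ^ 2 ≤ s ^ 2 * (L * d) ^ 2 := by
      nlinarith [hP2, mul_nonneg (mul_nonneg (sq_nonneg δ) (sq_nonneg L)) (sub_nonneg.2 hds),
        mul_nonneg (sq_nonneg (δ ^ 2)) (sq_nonneg L), sq_nonneg P, sq_nonneg δ]
    nlinarith [h1, mul_pos hS (mul_pos hL hd), mul_neg_of_neg_of_pos hP hS,
      mul_pos hs (mul_pos hL hd)]
end

section
/- Let C be a LUR (locally uniformly rotund) set in a real Hilbert space H and let f : C → C be a nonexpansive mapping such that dist(f^k(x), ∂C) → 0 as k → ∞ for every x ∈ C. Let x₀ ∈ C be a fixed point of f. Then there is a continuous function α : (0, Δ_C(x₀)) → (0,1) such that for every r ∈ (0, Δ_C(x₀)) and every x ∈ C with ‖x − x₀‖ = r, there exists a positive integer k with ‖f^k(x) − x₀‖ ≤ α(r)·r. -/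
open Metric RealInnerProductSpace

variable {H : Type*} [NormedAddCommGroup H] [InnerProductSpace ℝ H]

lemma lurModulus_le (C : Set H) (x : H) {ε : ℝ} {q : H} (hq : q ∈ C) (h : ε ≤ ‖q - x‖) :
    lurModulus C x ε ≤ infDist ((2:ℝ)⁻¹ • (x + q)) (frontier C) :=
  csInf_le ⟨0, by rintro t ⟨y, hy, rfl⟩; exact infDist_nonneg⟩ ⟨q, ⟨hq, h⟩, rfl⟩

lemma lurModulus_mono (C : Set H) (x : H) {ε₁ ε₂ : ℝ} (h : ε₁ ≤ ε₂)
    (hw : ∃ y ∈ C, ε₂ ≤ ‖y - x‖) : lurModulus C x ε₁ ≤ lurModulus C x ε₂ := by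
  obtain ⟨y, hyC, hy⟩ := hw
  refine csInf_le_csInf ⟨0, by rintro t ⟨z, hz, rfl⟩; exact infDist_nonneg⟩
    ⟨_, ⟨y, ⟨hyC, hy⟩, rfl⟩⟩ (Set.image_mono fun z hz => ⟨hz.1, h.trans hz.2⟩)

set_option maxHeartbeats 1600000 in
/-- Let `C` be LUR and `f : C → C` nonexpansive with `dist(fᵏ(x), ∂C) → 0` for every
`x ∈ C`, and let `x₀` be a fixed point of `f`. Then there is a continuous function
`α : (0, Δ_C(x₀)) → (0,1)` such that for every `r ∈ (0, Δ_C(x₀))` and every `x ∈ C` with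
`‖x − x₀‖ = r` there is a positive integer `k` with `‖fᵏ(x) − x₀‖ ≤ α(r)·r`. -/
theorem exists_contraction_modulus (C : Set H) (hC : IsLUR C)
    (f : C → C) (hf : ∀ x y : C, dist (f x) (f y) ≤ dist x y)
    (hiter : ∀ x : C, Filter.Tendsto
      (fun k : ℕ => infDist ((f^[k] x : C) : H) (frontier C)) Filter.atTop (nhds 0))
    (x₀ : C) (hx₀ : f x₀ = x₀) :
    ∃ α : ℝ → ℝ,
      ContinuousOn α {r : ℝ | 0 < r ∧ ∃ y ∈ C, r < ‖y - (x₀ : H)‖} ∧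
      (∀ r ∈ {r : ℝ | 0 < r ∧ ∃ y ∈ C, r < ‖y - (x₀ : H)‖}, α r ∈ Set.Ioo (0 : ℝ) 1) ∧
      ∀ r ∈ {r : ℝ | 0 < r ∧ ∃ y ∈ C, r < ‖y - (x₀ : H)‖}, ∀ x : C,
        ‖(x : H) - (x₀ : H)‖ = r →
          ∃ k : ℕ, 0 < k ∧ ‖((f^[k] x : C) : H) - (x₀ : H)‖ ≤ α r * r := by
  obtain ⟨hconv, -, hlur⟩ := hC
  set S : Set ℝ := {r : ℝ | 0 < r ∧ ∃ y ∈ C, r < ‖y - (x₀ : H)‖} with hSdef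
  set m : ℝ → ℝ := fun s => lurModulus C (x₀ : H) s with hmdef
  set F : ℝ → ℝ := fun r => ∫ s in (r/4)..(r/2), m s with hFdef
  set D : ℝ → ℝ := fun r => (4/r) * F r with hDdef
  set α : ℝ → ℝ := fun r => Real.sqrt (1 - min (4 * (D r)^2 / r^2) (3/4) / 2) with hαdef
  have hmono : ∀ {ε₁ ε₂ : ℝ}, ε₁ ≤ ε₂ → (∃ y ∈ C, ε₂ ≤ ‖y - (x₀ : H)‖) → m ε₁ ≤ m ε₂ := by
    intro ε₁ ε₂ h hw; exact lurModulus_mono C _ h hw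
  have hInt : ∀ r : ℝ, 0 < r → (∃ y ∈ C, r < ‖y - (x₀ : H)‖) →
      IntervalIntegrable m MeasureTheory.volume (r/4) (r/2) := by
    rintro r hr0 ⟨y, hyC, hyr⟩
    apply MonotoneOn.intervalIntegrable
    intro s₁ hs₁ s₂ hs₂ h12
    rw [Set.uIcc_of_le (by linarith)] at hs₁ hs₂
    exact hmono h12 ⟨y, hyC, by have := hs₂.2; linarith⟩
  clear_value m F D α
  have hDfact : ∀ r ∈ S, m (r/4) ≤ D r ∧ D r ≤ m (r/2) := by
    rintro r hr
    rw [hSdef, Set.mem_setOf_eq] at hr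
    obtain ⟨hr0, y, hyC, hyr⟩ := hr
    have hle24 : (r/4 : ℝ) ≤ r/2 := by linarith
    have hlow : (r/2 - r/4) * m (r/4) ≤ F r := by
      have h := intervalIntegral.integral_mono_on (μ := MeasureTheory.volume)
        (f := fun _ => m (r/4)) (g := m) hle24 (intervalIntegrable_const)
        (hInt r hr0 ⟨y, hyC, hyr⟩)
        (fun s hs => hmono hs.1 ⟨y, hyC, by have := hs.2; linarith⟩)
      rw [hFdef]
      simpa using h
    have hhigh : F r ≤ (r/2 - r/4) * m (r/2) := by
      have h := intervalIntegral.integral_mono_on (μ := MeasureTheory.volume)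
        (f := m) (g := fun _ => m (r/2)) hle24 (hInt r hr0 ⟨y, hyC, hyr⟩)
        (intervalIntegrable_const)
        (fun s hs => hmono hs.2 ⟨y, hyC, by linarith⟩)
      rw [hFdef]
      simpa using h
    have h4r : 0 < 4 / r := by positivity
    rw [hDdef]
    constructor
    · have h := mul_le_mul_of_nonneg_left hlow h4r.le
      calc m (r/4) = (4/r) * ((r/2 - r/4) * m (r/4)) := by field_simp; ring
        _ ≤ (4/r) * F r := h
    · have h := mul_le_mul_of_nonneg_left hhigh h4r.le
      calc (4/r) * F r ≤ (4/r) * ((r/2 - r/4) * m (r/2)) := h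
        _ = m (r/2) := by field_simp; ring
  have hm4pos : ∀ r ∈ S, 0 < m (r/4) := by
    rintro r hr
    rw [hSdef, Set.mem_setOf_eq] at hr
    obtain ⟨hr0, y, hyC, hyr⟩ := hr
    rw [hmdef]
    exact hlur _ x₀.2 (r/4) (by linarith) ⟨y, hyC, by linarith⟩
  have hDpos : ∀ r ∈ S, 0 < D r := fun r hr => (hm4pos r hr).trans_le (hDfact r hr).1
  have hαfact : ∀ r ∈ S, 0 < α r ∧ α r < 1 ∧ 1/2 ≤ α r ∧
      r^2 * (1 - (α r)^2) ≤ 2 * (D r)^2 := by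
    intro r hr
    have hr0 : 0 < r := by rw [hSdef] at hr; exact hr.1
    have hD := hDpos r hr
    have hμpos : 0 < min (4 * (D r)^2 / r^2) (3/4) := lt_min (by positivity) (by norm_num)
    have hμle : min (4 * (D r)^2 / r^2) (3/4) ≤ 3/4 := min_le_right _ _
    have hμle' : min (4 * (D r)^2 / r^2) (3/4) ≤ 4 * (D r)^2 / r^2 := min_le_left _ _
    have hval : α r = Real.sqrt (1 - min (4 * (D r)^2 / r^2) (3/4) / 2) := by
      rw [hαdef]
    have hsq : (α r)^2 = 1 - min (4 * (D r)^2 / r^2) (3/4) / 2 := by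
      rw [hval]; exact Real.sq_sqrt (by linarith)
    have hαpos : 0 < α r := by rw [hval]; exact Real.sqrt_pos.2 (by linarith)
    have hαlt : α r < 1 := by
      rw [hval]
      refine (Real.sqrt_lt' one_pos).2 ?_
      nlinarith
    have hmul : r^2 * min (4 * (D r)^2 / r^2) (3/4) ≤ 4 * (D r)^2 := by
      have h := mul_le_mul_of_nonneg_left hμle' (sq_nonneg r)
      have h2 : r^2 * (4 * (D r)^2 / r^2) = 4 * (D r)^2 := by
        field_simp
      linarith
    refine ⟨hαpos, hαlt, by nlinarith, ?_⟩
    calc r^2 * (1 - (α r)^2) = r^2 * (min (4 * (D r)^2 / r^2) (3/4)) / 2 := by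
          rw [hsq]; ring
      _ ≤ 2 * (D r)^2 := by linarith
  refine ⟨α, ?_, fun r hr => ⟨(hαfact r hr).1, (hαfact r hr).2.1⟩, ?_⟩
  · -- continuity
    intro r hr
    have hr' := hr
    rw [hSdef, Set.mem_setOf_eq] at hr'
    obtain ⟨hr0, y, hyC, hyr⟩ := hr'
    set R : ℝ := ‖y - (x₀ : H)‖ with hRdef
    have hR : 0 < R := lt_trans hr0 hyr
    set mh : ℝ → ℝ := fun s => m (min s R) with hmhdef
    have hmh_mono : Monotone mh := by
      intro s₁ s₂ h
      rw [hmhdef]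
      exact hmono (min_le_min_right R h) ⟨y, hyC, min_le_right _ _⟩
    set Fh : ℝ → ℝ := fun t => ∫ s in (0:ℝ)..t, mh s with hFhdef
    have hFh_cont : Continuous Fh := by
      rw [hFhdef]
      exact intervalIntegral.continuous_primitive (fun a b => hmh_mono.intervalIntegrable) 0
    clear_value mh Fh
    have hg1 : ContinuousAt (fun r' : ℝ => (4/r') * (Fh (r'/2) - Fh (r'/4))) r := by
      have c1 : ContinuousAt (fun r' : ℝ => (4:ℝ)/r') r :=
        continuousAt_const.div continuousAt_id hr0.ne'
      have c2 : ContinuousAt (fun r' : ℝ => Fh (r'/2)) r :=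
        (hFh_cont.comp (continuous_id.div_const 2)).continuousAt
      have c3 : ContinuousAt (fun r' : ℝ => Fh (r'/4)) r :=
        (hFh_cont.comp (continuous_id.div_const 4)).continuousAt
      exact c1.mul (c2.sub c3)
    have hg2a : ContinuousAt (fun r' : ℝ =>
        4 * ((4/r') * (Fh (r'/2) - Fh (r'/4)))^2 / r'^2) r :=
      (continuousAt_const.mul (hg1.pow 2)).div (continuousAt_id.pow 2)
        (pow_ne_zero 2 hr0.ne')
    have hg2b : ContinuousAt (fun r' : ℝ =>
        min (4 * ((4/r') * (Fh (r'/2) - Fh (r'/4)))^2 / r'^2) (3/4)) r :=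
      Filter.Tendsto.min hg2a continuousAt_const
    have hg2 : ContinuousAt (fun r' : ℝ =>
        1 - min (4 * ((4/r') * (Fh (r'/2) - Fh (r'/4)))^2 / r'^2) (3/4) / 2) r :=
      continuousAt_const.sub (hg2b.div_const 2)
    have hαh_cont : ContinuousAt (fun r' : ℝ =>
        Real.sqrt (1 - min (4 * ((4/r') * (Fh (r'/2) - Fh (r'/4)))^2 / r'^2) (3/4) / 2)) r :=
      Real.continuous_sqrt.continuousAt.comp hg2
    have heq : ∀ r' ∈ Set.Ioo (0:ℝ) (2*R), α r' =
        Real.sqrt (1 - min (4 * ((4/r') * (Fh (r'/2) - Fh (r'/4)))^2 / r'^2) (3/4) / 2) := by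
      rintro r' ⟨h0', h2R⟩
      have hFr : F r' = Fh (r'/2) - Fh (r'/4) := by
        have hadj : Fh (r'/4) + (∫ s in (r'/4)..(r'/2), mh s) = Fh (r'/2) := by
          rw [hFhdef]
          exact intervalIntegral.integral_add_adjacent_intervals
            (hmh_mono.intervalIntegrable) (hmh_mono.intervalIntegrable)
        have hcongr : (∫ s in (r'/4)..(r'/2), mh s) = F r' := by
          rw [hFdef]
          apply intervalIntegral.integral_congr
          intro s hs
          rw [Set.uIcc_of_le (by linarith)] at hs
          have hsR : s ≤ R := by have := hs.2; linarith
          rw [hmhdef]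
          simp only [min_eq_left hsR]
        linarith
      simp only [hαdef, hDdef, hFr]
    have hmem : Set.Ioo (0:ℝ) (2*R) ∈ nhds r := Ioo_mem_nhds hr0 (by linarith)
    refine hαh_cont.continuousWithinAt.congr_of_eventuallyEq ?_ (heq r ⟨hr0, by linarith⟩)
    exact Filter.eventuallyEq_of_mem (nhdsWithin_le_nhds hmem) heq
  · -- main contraction property
    rintro r hr x hx
    have hrS := hr
    rw [hSdef, Set.mem_setOf_eq] at hr
    obtain ⟨hr0, y, hyC, hyr⟩ := hr
    obtain ⟨hαpos, hαlt, hαhalf, hαsq⟩ := hαfact r hrS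
    have hD := hDpos r hrS
    have hDle := (hDfact r hrS).2
    by_contra hcon
    push_neg at hcon
    have hall : ∀ k : ℕ, α r * r < ‖((f^[k] x : C) : H) - (x₀ : H)‖ := by
      intro k
      cases k with
      | zero => simpa [hx] using (by nlinarith : α r * r < r)
      | succ n => exact hcon (n+1) n.succ_pos
    have hzC : (2:ℝ)⁻¹ • ((x₀ : H) + (x : H)) ∈ C := by
      have h := hconv x₀.2 x.2 (by norm_num : (0:ℝ) ≤ 1/2) (by norm_num : (0:ℝ) ≤ 1/2)
        (by norm_num)
      convert h using 1
      rw [smul_add]; norm_num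
    set z : C := ⟨(2:ℝ)⁻¹ • ((x₀ : H) + (x : H)), hzC⟩ with hzdef
    have hzH : (z : H) = (2:ℝ)⁻¹ • ((x₀ : H) + (x : H)) := rfl
    clear_value z
    have hiterate : ∀ (k : ℕ) (a b : C), dist (f^[k] a) (f^[k] b) ≤ dist a b := by
      intro k
      induction k with
      | zero => simp
      | succ n ih =>
        intro a b
        rw [Function.iterate_succ_apply', Function.iterate_succ_apply']
        exact le_trans (hf _ _) (ih a b)
    have hx₀iter : ∀ k : ℕ, f^[k] x₀ = x₀ := fun k => Function.iterate_fixed hx₀ k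
    have hsqrtD : Real.sqrt ((D r)^2/2) < D r := (Real.sqrt_lt' hD).2 (by nlinarith)
    have hbound : ∀ k : ℕ, D r - Real.sqrt ((D r)^2/2) ≤
        infDist ((f^[k] z : C) : H) (frontier C) := by
      intro k
      set a : H := ((f^[k] z : C) : H) with hadef
      set q : H := ((f^[k] x : C) : H) with hqdef
      have hqC : q ∈ C := by rw [hqdef]; exact (f^[k] x).2
      have hq : α r * r < ‖q - (x₀ : H)‖ := by
        have h := hall k
        rwa [← hqdef] at h
      have hia : dist a (x₀ : H) ≤ dist (z : H) (x₀ : H) := by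
        have h := hiterate k z x₀
        rw [hx₀iter k, Subtype.dist_eq, Subtype.dist_eq] at h
        rwa [← hadef] at h
      have hiq : dist a q ≤ dist (z : H) (x : H) := by
        have h := hiterate k z x
        rw [Subtype.dist_eq, Subtype.dist_eq] at h
        rwa [← hadef, ← hqdef] at h
      clear_value a q
      have h1 : ‖a - (x₀ : H)‖ ≤ r/2 := by
        rw [dist_eq_norm, dist_eq_norm] at hia
        have e1 : (2:ℝ)⁻¹ • ((x₀ : H) + (x : H)) - (x₀ : H)
            = (2:ℝ)⁻¹ • ((x : H) - (x₀ : H)) := by module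
        have hz1 : ‖(z : H) - (x₀ : H)‖ = r/2 := by
          rw [hzH, e1, norm_smul, Real.norm_eq_abs, hx,
            abs_of_pos (by norm_num : (0:ℝ) < 2⁻¹)]
          ring
        calc ‖a - (x₀ : H)‖ ≤ _ := hia
          _ = r/2 := hz1
      have h2 : ‖a - q‖ ≤ r/2 := by
        rw [dist_eq_norm, dist_eq_norm] at hiq
        have e2 : (2:ℝ)⁻¹ • ((x₀ : H) + (x : H)) - (x : H)
            = (2:ℝ)⁻¹ • ((x₀ : H) - (x : H)) := by module
        have hz2 : ‖(z : H) - (x : H)‖ = r/2 := by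
          rw [hzH, e2, norm_smul, Real.norm_eq_abs, norm_sub_rev, hx,
            abs_of_pos (by norm_num : (0:ℝ) < 2⁻¹)]
          ring
        calc ‖a - q‖ ≤ _ := hiq
          _ = r/2 := hz2
      have hpar : ‖a - (2:ℝ)⁻¹ • ((x₀ : H) + q)‖^2
          = (‖a - (x₀ : H)‖^2 + ‖a - q‖^2)/2 - ‖q - (x₀ : H)‖^2/4 := by
        have hplaw := parallelogram_law_with_norm ℝ (a - (x₀ : H)) (a - q)
        have e4 : (a - (x₀ : H)) - (a - q) = q - (x₀ : H) := by abel
        rw [e4] at hplaw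
        have e3 : a - (2:ℝ)⁻¹ • ((x₀ : H) + q)
            = (2:ℝ)⁻¹ • ((a - (x₀ : H)) + (a - q)) := by module
        have e5 : ‖a - (2:ℝ)⁻¹ • ((x₀ : H) + q)‖
            = 2⁻¹ * ‖(a - (x₀ : H)) + (a - q)‖ := by
          rw [e3, norm_smul, Real.norm_eq_abs, abs_of_pos (by norm_num : (0:ℝ) < 2⁻¹)]
        rw [e5]; nlinarith [hplaw]
      have hqnn : (0:ℝ) ≤ α r * r := by positivity
      have hee1 : ‖a - (x₀ : H)‖^2 ≤ (r/2)^2 := pow_le_pow_left₀ (norm_nonneg _) h1 2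
      have hee2 : ‖a - q‖^2 ≤ (r/2)^2 := pow_le_pow_left₀ (norm_nonneg _) h2 2
      have hee3 : (α r * r)^2 ≤ ‖q - (x₀ : H)‖^2 := pow_le_pow_left₀ hqnn hq.le 2
      have hsq2 : ‖a - (2:ℝ)⁻¹ • ((x₀ : H) + q)‖^2 ≤ (D r)^2/2 := by nlinarith
      have hdista : ‖a - (2:ℝ)⁻¹ • ((x₀ : H) + q)‖ ≤ Real.sqrt ((D r)^2/2) := by
        have h := Real.sqrt_le_sqrt hsq2
        rwa [Real.sqrt_sq (norm_nonneg _)] at h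
      have hmk : D r ≤ infDist ((2:ℝ)⁻¹ • ((x₀ : H) + q)) (frontier C) := by
        refine hDle.trans ?_
        rw [hmdef]
        refine lurModulus_le C _ hqC ?_
        nlinarith
      have htri : infDist ((2:ℝ)⁻¹ • ((x₀ : H) + q)) (frontier C)
          ≤ infDist a (frontier C) + dist ((2:ℝ)⁻¹ • ((x₀ : H) + q)) a :=
        infDist_le_infDist_add_dist
      rw [dist_eq_norm, norm_sub_rev] at htri
      linarith
    have hcpos : 0 < D r - Real.sqrt ((D r)^2/2) := by linarith
    obtain ⟨k, hk⟩ := ((hiter z).eventually_lt_const hcpos).exists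
    exact absurd (hbound k) (not_le.2 hk)
end
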